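/- arXiv:2602.10000 — 4 statements merged into one kernel-verified Lean document; each statement's English description precedes it below -/
import Mathlib

section
/- In any sesquicategory S, the strict cells contain all identity cells, are closed under vertical composition and under whiskering with morphisms on either side, and any two horizontally composable strict cells φ : f ⇒ g : A → C and ψ : h ⇒ k : C → E satisfy the middle-four interchange law; consequently the objects and morphisms of S together with its strict cells form a wide sub-2-category S_str of S, in which the horizontal composite of strict cells is the common value (h∘φ)•(ψ∘g) = (ψ∘f)•(k∘φ). The same statements hold for the costrict cells, yielding a wide sub-2-category S_costr. -/
universe u v w

namespace SRK

/-- A *sesquicategory*: objects, morphisms (with strictly associative and unital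
composition `hcomp`), and for each pair of parallel morphisms a type of cells, equipped
with vertical composition `vcomp` (making each `S (A, C)` a category) and with
whiskering operations `wl` (whiskering of a cell with a morphism on the left/source side)
and `wr` (whiskering with a morphism on the right/target side) which are functorial with
respect to vertical composition, associative, unital and compatible with composition of
morphisms.  No horizontal composition of cells and no interchange law is assumed. -/
structure Sesquicat where
  Obj : Type u
  Hom : Obj → Obj → Type v
  Cell : {A B : Obj} → Hom A B → Hom A B → Type w
  hid : (A : Obj) → Hom A A
  hcomp : {A B C : Obj} → Hom A B → Hom B C → Hom A C
  cid : {A B : Obj} → (f : Hom A B) → Cell f f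
  vcomp : {A B : Obj} → {f g h : Hom A B} → Cell f g → Cell g h → Cell f h
  wl : {A B C : Obj} → (f : Hom A B) → {g h : Hom B C} → Cell g h →
    Cell (hcomp f g) (hcomp f h)
  wr : {A B C : Obj} → {f g : Hom A B} → Cell f g → (h : Hom B C) →
    Cell (hcomp f h) (hcomp g h)
  hid_comp : ∀ {A B : Obj} (f : Hom A B), hcomp (hid A) f = f
  comp_hid : ∀ {A B : Obj} (f : Hom A B), hcomp f (hid B) = f
  hassoc : ∀ {A B C D : Obj} (f : Hom A B) (g : Hom B C) (h : Hom C D),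
    hcomp (hcomp f g) h = hcomp f (hcomp g h)
  cid_vcomp : ∀ {A B : Obj} {f g : Hom A B} (φ : Cell f g), vcomp (cid f) φ = φ
  vcomp_cid : ∀ {A B : Obj} {f g : Hom A B} (φ : Cell f g), vcomp φ (cid g) = φ
  vassoc : ∀ {A B : Obj} {f g h k : Hom A B} (φ : Cell f g) (ψ : Cell g h) (χ : Cell h k),
    vcomp (vcomp φ ψ) χ = vcomp φ (vcomp ψ χ)
  wl_cid : ∀ {A B C : Obj} (f : Hom A B) (g : Hom B C), wl f (cid g) = cid (hcomp f g)
  wl_vcomp : ∀ {A B C : Obj} (f : Hom A B) {g h k : Hom B C} (φ : Cell g h) (ψ : Cell h k),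
    wl f (vcomp φ ψ) = vcomp (wl f φ) (wl f ψ)
  wr_cid : ∀ {A B C : Obj} (f : Hom A B) (g : Hom B C), wr (cid f) g = cid (hcomp f g)
  wr_vcomp : ∀ {A B C : Obj} {f g h : Hom A B} (φ : Cell f g) (ψ : Cell g h) (k : Hom B C),
    wr (vcomp φ ψ) k = vcomp (wr φ k) (wr ψ k)
  wl_hid : ∀ {A B : Obj} {f g : Hom A B} (φ : Cell f g), HEq (wl (hid A) φ) φ
  wr_hid : ∀ {A B : Obj} {f g : Hom A B} (φ : Cell f g), HEq (wr φ (hid B)) φ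
  wl_wl : ∀ {A B C D : Obj} (e : Hom A B) (f : Hom B C) {g h : Hom C D} (φ : Cell g h),
    HEq (wl e (wl f φ)) (wl (hcomp e f) φ)
  wr_wr : ∀ {A B C D : Obj} {f g : Hom A B} (φ : Cell f g) (h : Hom B C) (k : Hom C D),
    HEq (wr (wr φ h) k) (wr φ (hcomp h k))
  wl_wr : ∀ {A B C D : Obj} (e : Hom A B) {f g : Hom B C} (φ : Cell f g) (h : Hom C D),
    HEq (wr (wl e φ) h) (wl e (wr φ h))

/-- Horizontally composable cells `φ : f ⇒ g : A → C` and `ψ : h ⇒ k : C → E` satisfy the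
middle-four interchange law `(h∘φ)•(ψ∘g) = (ψ∘f)•(k∘φ)`; i.e. `ψ` is `φ`-strict and `φ`
is `ψ`-costrict.  (`•` is written in diagrammatic order.) -/
def Sesquicat.Interchanges (S : Sesquicat.{u, v, w}) {A C E : S.Obj} {f g : S.Hom A C}
    {h k : S.Hom C E} (φ : S.Cell f g) (ψ : S.Cell h k) : Prop :=
  S.vcomp (S.wr φ h) (S.wl g ψ) = S.vcomp (S.wl f ψ) (S.wr φ k)

/-- A cell `ψ` is *strict* if it is `φ`-strict for every horizontally precomposable `φ`. -/
def Sesquicat.IsStrict (S : Sesquicat.{u, v, w}) {C E : S.Obj} {h k : S.Hom C E}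
    (ψ : S.Cell h k) : Prop :=
  ∀ {A : S.Obj} {f g : S.Hom A C} (φ : S.Cell f g), S.Interchanges φ ψ

/-- A cell `φ` is *costrict* if it is `ψ`-costrict for every horizontally
postcomposable `ψ`. -/
def Sesquicat.IsCostrict (S : Sesquicat.{u, v, w}) {A C : S.Obj} {f g : S.Hom A C}
    (φ : S.Cell f g) : Prop :=
  ∀ {E : S.Obj} {h k : S.Hom C E} (ψ : S.Cell h k), S.Interchanges φ ψ


private lemma Sesquicat.vcomp_heq (S : Sesquicat.{u, v, w}) {A B : S.Obj}
    {f g h f' g' h' : S.Hom A B} (hf : f = f') (hg : g = g') (hh : h = h')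
    {φ : S.Cell f g} {φ' : S.Cell f' g'} {ψ : S.Cell g h} {ψ' : S.Cell g' h'}
    (h1 : HEq φ φ') (h2 : HEq ψ ψ') : HEq (S.vcomp φ ψ) (S.vcomp φ' ψ') := by
  subst hf hg hh
  rw [eq_of_heq h1, eq_of_heq h2]

/-- In any sesquicategory `S` the strict cells contain all identity cells, are closed
under vertical composition and under whiskering with morphisms on either side, and any
two horizontally composable strict cells satisfy the middle-four interchange law;
consequently the objects and morphisms of `S` together with its strict cells form a wide
sub-2-category `S_str` of `S`, in which the horizontal composite of strict cells is the
common value `(h∘φ)•(ψ∘g) = (ψ∘f)•(k∘φ)`.  The same statements hold for the costrict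
cells, yielding a wide sub-2-category `S_costr`. -/
theorem strict_and_costrict_cells_form_wide_sub_two_categories (S : Sesquicat.{u, v, w}) :
    -- identity cells are strict
    (∀ {A C : S.Obj} (f : S.Hom A C), S.IsStrict (S.cid f)) ∧
    -- strict cells are closed under vertical composition
    (∀ {A C : S.Obj} {f g h : S.Hom A C} (φ : S.Cell f g) (ψ : S.Cell g h),
      S.IsStrict φ → S.IsStrict ψ → S.IsStrict (S.vcomp φ ψ)) ∧
    -- strict cells are closed under whiskering with morphisms on either side
    (∀ {A C E : S.Obj} (e : S.Hom A C) {f g : S.Hom C E} (ψ : S.Cell f g),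
      S.IsStrict ψ → S.IsStrict (S.wl e ψ)) ∧
    (∀ {A C E : S.Obj} {f g : S.Hom A C} (ψ : S.Cell f g) (h : S.Hom C E),
      S.IsStrict ψ → S.IsStrict (S.wr ψ h)) ∧
    -- any two horizontally composable strict cells satisfy middle-four interchange,
    -- so that their horizontal composite is the common value (h∘φ)•(ψ∘g) = (ψ∘f)•(k∘φ)
    (∀ {A C E : S.Obj} {f g : S.Hom A C} {h k : S.Hom C E} (φ : S.Cell f g)
      (ψ : S.Cell h k), S.IsStrict φ → S.IsStrict ψ → S.Interchanges φ ψ) ∧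
    -- identity cells are costrict
    (∀ {A C : S.Obj} (f : S.Hom A C), S.IsCostrict (S.cid f)) ∧
    -- costrict cells are closed under vertical composition
    (∀ {A C : S.Obj} {f g h : S.Hom A C} (φ : S.Cell f g) (ψ : S.Cell g h),
      S.IsCostrict φ → S.IsCostrict ψ → S.IsCostrict (S.vcomp φ ψ)) ∧
    -- costrict cells are closed under whiskering with morphisms on either side
    (∀ {A C E : S.Obj} (e : S.Hom A C) {f g : S.Hom C E} (ψ : S.Cell f g),
      S.IsCostrict ψ → S.IsCostrict (S.wl e ψ)) ∧
    (∀ {A C E : S.Obj} {f g : S.Hom A C} (ψ : S.Cell f g) (h : S.Hom C E),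
      S.IsCostrict ψ → S.IsCostrict (S.wr ψ h)) ∧
    -- any two horizontally composable costrict cells satisfy middle-four interchange
    (∀ {A C E : S.Obj} {f g : S.Hom A C} {h k : S.Hom C E} (φ : S.Cell f g)
      (ψ : S.Cell h k), S.IsCostrict φ → S.IsCostrict ψ → S.Interchanges φ ψ) := by
  refine ⟨?_, ?_, ?_, ?_, ?_, ?_, ?_, ?_, ?_, ?_⟩
  · -- identity cells are strict
    intro A C f A' a b φ
    unfold Sesquicat.Interchanges
    rw [S.wl_cid, S.wl_cid, S.vcomp_cid, S.cid_vcomp]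
  · -- strict closed under vcomp
    intro A C f g h φ ψ hφ hψ Z a b χ
    unfold Sesquicat.Interchanges
    rw [S.wl_vcomp, S.wl_vcomp, ← S.vassoc, hφ χ, S.vassoc, hψ χ, ← S.vassoc]
  · -- strict closed under wl
    intro A C E e f g ψ hψ Z a b χ
    unfold Sesquicat.Interchanges
    apply eq_of_heq
    refine HEq.trans (HEq.trans
      (S.vcomp_heq (S.hassoc a e f).symm (S.hassoc b e f).symm (S.hassoc b e g).symm
        (S.wr_wr χ e f).symm (S.wl_wl b e ψ))
      (heq_of_eq (hψ (S.wr χ e)))) ?_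
    exact S.vcomp_heq (S.hassoc a e f) (S.hassoc a e g) (S.hassoc b e g)
      (S.wl_wl a e ψ).symm (S.wr_wr χ e g)
  · -- strict closed under wr
    intro A C E f g ψ h hψ Z a b χ
    unfold Sesquicat.Interchanges
    apply eq_of_heq
    have H : S.vcomp (S.wr (S.wr χ f) h) (S.wr (S.wl b ψ) h)
        = S.vcomp (S.wr (S.wl a ψ) h) (S.wr (S.wr χ g) h) := by
      rw [← S.wr_vcomp, ← S.wr_vcomp, hψ χ]
    refine HEq.trans (HEq.trans
      (S.vcomp_heq (S.hassoc a f h).symm (S.hassoc b f h).symm (S.hassoc b g h).symm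
        (S.wr_wr χ f h).symm (S.wl_wr b ψ h).symm)
      (heq_of_eq H)) ?_
    exact S.vcomp_heq (S.hassoc a f h) (S.hassoc a g h) (S.hassoc b g h)
      (S.wl_wr a ψ h) (S.wr_wr χ g h)
  · -- strict cells interchange
    intro A C E f g h k φ ψ _ hψ
    exact hψ φ
  · -- identity cells are costrict
    intro A C f E h k ψ
    unfold Sesquicat.Interchanges
    rw [S.wr_cid, S.wr_cid, S.cid_vcomp, S.vcomp_cid]
  · -- costrict closed under vcomp
    intro A C f g h φ ψ hφ hψ Z p q χ
    unfold Sesquicat.Interchanges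
    rw [S.wr_vcomp, S.wr_vcomp, S.vassoc, hψ χ, ← S.vassoc, hφ χ, S.vassoc]
  · -- costrict closed under wl
    intro A C E e f g ψ hψ Z p q χ
    unfold Sesquicat.Interchanges
    apply eq_of_heq
    have H : S.vcomp (S.wl e (S.wr ψ p)) (S.wl e (S.wl g χ))
        = S.vcomp (S.wl e (S.wl f χ)) (S.wl e (S.wr ψ q)) := by
      rw [← S.wl_vcomp, ← S.wl_vcomp, hψ χ]
    refine HEq.trans (HEq.trans
      (S.vcomp_heq (S.hassoc e f p) (S.hassoc e g p) (S.hassoc e g q)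
        (S.wl_wr e ψ p) (S.wl_wl e g χ).symm)
      (heq_of_eq H)) ?_
    exact S.vcomp_heq (S.hassoc e f p).symm (S.hassoc e f q).symm (S.hassoc e g q).symm
      (S.wl_wl e f χ) (S.wl_wr e ψ q).symm
  · -- costrict closed under wr
    intro A C E f g ψ h hψ Z p q χ
    unfold Sesquicat.Interchanges
    apply eq_of_heq
    refine HEq.trans (HEq.trans
      (S.vcomp_heq (S.hassoc f h p) (S.hassoc g h p) (S.hassoc g h q)
        (S.wr_wr ψ h p) (S.wl_wl g h χ).symm)
      (heq_of_eq (hψ (S.wl h χ)))) ?_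
    exact S.vcomp_heq (S.hassoc f h p).symm (S.hassoc f h q).symm (S.hassoc g h q).symm
      (S.wl_wl f h χ) (S.wr_wr ψ h q).symm
  · -- costrict cells interchange
    intro A C E f g h k φ ψ hφ _
    exact hφ ψ


end SRK
end

section
/- Let S be a sesquicategory, let A →f C ←g B be a cospan in S, and assume the 2-cotensor C^2 exists with projections src, tgt : C^2 → C and universal cell δ : src ⇒ tgt. If the iterated conical pullback A ×_C C^2 ×_C B of the diagram A →f C ←src C^2 →tgt C ←g B exists, then it forms the 1-universal comma object f/g of f and g, defined as such by the cell δ∘π_{C^2}, where π_{C^2} is the projection onto C^2. -/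
universe u v w

namespace SRK

variable (S : Sesquicat.{u, v, w})

/-- The data `(P, πA, πB, π)` is a *1-universal comma object* of the cospan
`A →f C ←g B` if every cell `φ : f∘φA ⇒ g∘φB` factors uniquely through `π` via a
morphism `φ' : X → P` with `πA∘φ' = φA`, `πB∘φ' = φB` and `π∘φ' = φ`. -/
def IsCommaObject {A B C : S.Obj} (f : S.Hom A C) (g : S.Hom B C) (P : S.Obj)
    (πA : S.Hom P A) (πB : S.Hom P B) (π : S.Cell (S.hcomp πA f) (S.hcomp πB g)) : Prop :=
  ∀ {X : S.Obj} (φA : S.Hom X A) (φB : S.Hom X B)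
    (φ : S.Cell (S.hcomp φA f) (S.hcomp φB g)),
    ∃! φ' : S.Hom X P, S.hcomp φ' πA = φA ∧ S.hcomp φ' πB = φB ∧ HEq (S.wl φ' π) φ

/-- The data `(T, src, tgt, δ)` is the *2-cotensor* `C^2` of the object `C`, i.e. the
comma object `id_C / id_C`, with universal cell `δ : src ⇒ tgt`: every cell
`φ : φA ⇒ φB` between morphisms `X → C` factors uniquely through `δ` via a morphism
`X → T`. -/
def IsCotensor {C : S.Obj} (T : S.Obj) (src tgt : S.Hom T C) (δ : S.Cell src tgt) : Prop :=
  ∀ {X : S.Obj} (φA φB : S.Hom X C) (φ : S.Cell φA φB),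
    ∃! φ' : S.Hom X T, S.hcomp φ' src = φA ∧ S.hcomp φ' tgt = φB ∧ HEq (S.wl φ' δ) φ

/-- `(P, pA, pT, pB)` is the *iterated conical pullback* `A ×_C C^2 ×_C B` of the
diagram `A →f C ←src T →tgt C ←g B`, in the conical sense: it is a cone (the two
squares commute), every cone factors uniquely through it (1-dimensional universal
property) and every modification of cones with the same vertex factors uniquely through
it as a single cell (2-dimensional universal property). -/
def IsIteratedPullback {A B C : S.Obj} (f : S.Hom A C) (g : S.Hom B C) (T : S.Obj)
    (src tgt : S.Hom T C) (P : S.Obj) (pA : S.Hom P A) (pT : S.Hom P T)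
    (pB : S.Hom P B) : Prop :=
  S.hcomp pA f = S.hcomp pT src ∧ S.hcomp pT tgt = S.hcomp pB g ∧
  -- 1-dimensional universal property
  (∀ {X : S.Obj} (xA : S.Hom X A) (xT : S.Hom X T) (xB : S.Hom X B),
    S.hcomp xA f = S.hcomp xT src → S.hcomp xT tgt = S.hcomp xB g →
    ∃! x : S.Hom X P, S.hcomp x pA = xA ∧ S.hcomp x pT = xT ∧ S.hcomp x pB = xB) ∧
  -- 2-dimensional universal property: a modification between the cones corresponding to
  -- `x, y : X → P` consists of cells `MA, MT, MB` between their components such that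
  -- `f∘MA = src∘MT` and `tgt∘MT = g∘MB` (as cells at the two copies of `C`);
  -- it factors uniquely through the projections as a single cell `M : x ⇒ y`.
  (∀ {X : S.Obj} (x y : S.Hom X P)
    (MA : S.Cell (S.hcomp x pA) (S.hcomp y pA))
    (MT : S.Cell (S.hcomp x pT) (S.hcomp y pT))
    (MB : S.Cell (S.hcomp x pB) (S.hcomp y pB)),
    HEq (S.wr MA f) (S.wr MT src) → HEq (S.wr MT tgt) (S.wr MB g) →
    ∃! M : S.Cell x y, S.wr M pA = MA ∧ S.wr M pT = MT ∧ S.wr M pB = MB)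


theorem wl_congr (S : Sesquicat.{u, v, w}) {A B C : S.Obj} (e : S.Hom A B)
    {g g' h h' : S.Hom B C} (hg : g = g') (hh : h = h')
    {φ : S.Cell g h} {φ' : S.Cell g' h'} (hφ : HEq φ φ') :
    HEq (S.wl e φ) (S.wl e φ') := by
  subst hg; subst hh; rw [eq_of_heq hφ]

/-- Let `S` be a sesquicategory, let `A →f C ←g B` be a cospan in `S`, and assume the
2-cotensor `C^2` exists, with projections `src, tgt : C^2 → C` and universal cell
`δ : src ⇒ tgt`.  If the iterated conical pullback `A ×_C C^2 ×_C B` of the diagram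
`A →f C ←src C^2 →tgt C ←g B` exists, then it forms the 1-universal comma object `f/g`
of `f` and `g`, defined as such by the cell `δ∘π_{C^2}`. -/
theorem comma_object_from_cotensor_and_pullback {A B C : S.Obj} (f : S.Hom A C)
    (g : S.Hom B C) (T : S.Obj) (src tgt : S.Hom T C) (δ : S.Cell src tgt)
    (hT : IsCotensor S T src tgt δ) (P : S.Obj) (pA : S.Hom P A) (pT : S.Hom P T)
    (pB : S.Hom P B) (hP : IsIteratedPullback S f g T src tgt P pA pT pB) :
    IsCommaObject S f g P pA pB
      (cast (show S.Cell (S.hcomp pT src) (S.hcomp pT tgt)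
              = S.Cell (S.hcomp pA f) (S.hcomp pB g) by
          rw [hP.1, hP.2.1])
        (S.wl pT δ)):= by
  obtain ⟨h1, h2, h1d, _⟩ := hP
  intro X φA φB φ
  obtain ⟨t, ⟨ts, tt, tδ⟩, tuniq⟩ := hT (S.hcomp φA f) (S.hcomp φB g) φ
  obtain ⟨x, ⟨xA, xT, xB⟩, xuniq⟩ := h1d φA t φB ts.symm tt
  have castheq : HEq
      (cast (show S.Cell (S.hcomp pT src) (S.hcomp pT tgt)
              = S.Cell (S.hcomp pA f) (S.hcomp pB g) by rw [h1, h2])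
        (S.wl pT δ)) (S.wl pT δ) := cast_heq _ _
  refine ⟨x, ⟨xA, xB, ?_⟩, ?_⟩
  · refine HEq.trans (wl_congr S x h1 h2.symm castheq) ?_
    refine HEq.trans (S.wl_wl x pT δ) ?_
    refine HEq.trans (show HEq (S.wl (S.hcomp x pT) δ) (S.wl t δ) by rw [xT]) tδ
  · rintro y ⟨yA, yB, yδ⟩
    have hyt : S.hcomp y pT = t := by
      apply tuniq
      refine ⟨?_, ?_, ?_⟩
      · rw [S.hassoc, ← h1, ← S.hassoc, yA]
      · rw [S.hassoc, h2, ← S.hassoc, yB]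
      · refine HEq.trans (S.wl_wl y pT δ).symm ?_
        refine HEq.trans (wl_congr S y h1.symm h2 castheq.symm) yδ
    exact xuniq y ⟨yA, hyt, yB⟩


end SRK
end

section
/- Let S be a sesquicategory with chosen iterated conical pullbacks and 2-cotensors. For each object A, the span src, tgt : A^2 → A, together with the composition ᾱ : A^2 ×_A A^2 → A^2 (the unique factorization through the universal cell δ of the vertical pasting of the two whiskered copies of δ) and the unit α̃ : A → A^2 (the unique factorization of the identity cell id_{id_A} through δ), forms a category internal to the underlying 1-category of S. Moreover the assignment A ↦ (A, A^2, ᾱ, α̃) extends to a 2-functor from the wide sub-2-category S_str of strict cells of S to the 2-category Cat(|S|) of internal categories, internal functors and internal transformations in |S|, sending a morphism f : A → C to (f, f̄) where f̄ : A^2 → C^2 is the unique factorization of f∘δ_A through δ_C, and sending a strict cell φ : f ⇒ g to the internal transformation given by the unique factorization A → C^2 of φ through δ_C; this 2-functor is faithful and locally full, i.e. it is injective on morphisms and it induces bijections between strict cells f ⇒ g and internal transformations (f, f̄) ⇒ (g, ḡ). -/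
universe u v w

namespace SRK

/-- A chosen 2-cotensor `A^2` of an object `A` of a sesquicategory: an object `obj`
with projections `src, tgt : obj → A` and a universal cell `δ : src ⇒ tgt`, through
which every cell `φ : φA ⇒ φB : X → A` factors uniquely via a morphism `X → obj`. -/
structure Cotensor (S : Sesquicat.{u, v, w}) (A : S.Obj) where
  obj : S.Obj
  src : S.Hom obj A
  tgt : S.Hom obj A
  δ : S.Cell src tgt
  up : ∀ {X : S.Obj} (φA φB : S.Hom X A) (φ : S.Cell φA φB),
    ∃! φ' : S.Hom X obj, S.hcomp φ' src = φA ∧ S.hcomp φ' tgt = φB ∧ HEq (S.wl φ' δ) φ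

/-- The unique factorization of a cell `φ : φA ⇒ φB : X → A` through the universal
cell `δ` of the chosen 2-cotensor of `A`. -/
noncomputable def Cotensor.factor {S : Sesquicat.{u, v, w}} {A : S.Obj}
    (c : Cotensor S A) {X : S.Obj} {φA φB : S.Hom X A} (φ : S.Cell φA φB) :
    S.Hom X c.obj :=
  (c.up φA φB φ).exists.choose

/-- A category internal to the underlying 1-category of a sesquicategory `S`, carried by
the span `src, tgt : α → A`, described elementwise (equivalently, via chosen pullbacks,
by the Yoneda lemma): composition is given by a natural operation on pairs of
generalized elements `h₁, h₂ : X → α` that are composable (`tgt ∘ h₁ = src ∘ h₂`),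
together with a unit `A → α`, satisfying the usual unit and associativity axioms. -/
structure IsInternalCat (S : Sesquicat.{u, v, w}) {A α : S.Obj} (src tgt : S.Hom α A)
    (unit : S.Hom A α)
    (comp : ∀ {X : S.Obj} (h₁ h₂ : S.Hom X α),
      S.hcomp h₁ tgt = S.hcomp h₂ src → S.Hom X α) : Prop where
  unit_src : S.hcomp unit src = S.hid A
  unit_tgt : S.hcomp unit tgt = S.hid A
  comp_src : ∀ {X : S.Obj} (h₁ h₂ : S.Hom X α) (w : S.hcomp h₁ tgt = S.hcomp h₂ src),
    S.hcomp (comp h₁ h₂ w) src = S.hcomp h₁ src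
  comp_tgt : ∀ {X : S.Obj} (h₁ h₂ : S.Hom X α) (w : S.hcomp h₁ tgt = S.hcomp h₂ src),
    S.hcomp (comp h₁ h₂ w) tgt = S.hcomp h₂ tgt
  comp_natural : ∀ {X Y : S.Obj} (x : S.Hom Y X) (h₁ h₂ : S.Hom X α)
    (w : S.hcomp h₁ tgt = S.hcomp h₂ src)
    (w' : S.hcomp (S.hcomp x h₁) tgt = S.hcomp (S.hcomp x h₂) src),
    comp (S.hcomp x h₁) (S.hcomp x h₂) w' = S.hcomp x (comp h₁ h₂ w)
  comp_unit_left : ∀ {X : S.Obj} (h : S.Hom X α)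
    (w : S.hcomp (S.hcomp (S.hcomp h src) unit) tgt = S.hcomp h src),
    comp (S.hcomp (S.hcomp h src) unit) h w = h
  comp_unit_right : ∀ {X : S.Obj} (h : S.Hom X α)
    (w : S.hcomp h tgt = S.hcomp (S.hcomp (S.hcomp h tgt) unit) src),
    comp h (S.hcomp (S.hcomp h tgt) unit) w = h
  comp_assoc : ∀ {X : S.Obj} (h₁ h₂ h₃ : S.Hom X α)
    (w₁₂ : S.hcomp h₁ tgt = S.hcomp h₂ src) (w₂₃ : S.hcomp h₂ tgt = S.hcomp h₃ src)
    (w : S.hcomp (comp h₁ h₂ w₁₂) tgt = S.hcomp h₃ src)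
    (w' : S.hcomp h₁ tgt = S.hcomp (comp h₂ h₃ w₂₃) src),
    comp (comp h₁ h₂ w₁₂) h₃ w = comp h₁ (comp h₂ h₃ w₂₃) w'

variable {S : Sesquicat.{u, v, w}} (cot : ∀ A : S.Obj, Cotensor S A)

/-- The canonical unit `α̃ : A → A^2`, the unique factorization of the identity cell
`id_{id_A}` through `δ`. -/
noncomputable def unitOf (A : S.Obj) : S.Hom A (cot A).obj :=
  (cot A).factor (S.cid (S.hid A))

/-- The canonical composition on `A^2`: the unique factorization through `δ` of the
vertical pasting of the two whiskered copies of `δ`. -/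
noncomputable def compOf (A : S.Obj) {X : S.Obj} (h₁ h₂ : S.Hom X (cot A).obj)
    (w : S.hcomp h₁ (cot A).tgt = S.hcomp h₂ (cot A).src) : S.Hom X (cot A).obj :=
  (cot A).factor (S.vcomp (S.wl h₁ (cot A).δ)
    (cast (show S.Cell (S.hcomp h₂ (cot A).src) (S.hcomp h₂ (cot A).tgt)
            = S.Cell (S.hcomp h₁ (cot A).tgt) (S.hcomp h₂ (cot A).tgt) by rw [w])
      (S.wl h₂ (cot A).δ)))

/-- The morphism of spans `f̄ : A^2 → C^2` induced by a morphism `f : A → C`: the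
unique factorization of `f∘δ_A` through `δ_C`. -/
noncomputable def barOf {A C : S.Obj} (f : S.Hom A C) : S.Hom (cot A).obj (cot C).obj :=
  (cot C).factor (S.wr (cot A).δ f)

/-- The morphism `φ^2 : A → C^2` induced by a cell `φ : f ⇒ g : A → C`: the unique
factorization of `φ` through `δ_C`. -/
noncomputable def cellOf {A C : S.Obj} {f g : S.Hom A C} (φ : S.Cell f g) :
    S.Hom A (cot C).obj :=
  (cot C).factor φ

/-- `(f, f̄)` is an internal functor `(A, A^2) → (C, C^2)` (elementwise form). -/
def IsInternalFunctorOf {A C : S.Obj} (f : S.Hom A C)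
    (fbar : S.Hom (cot A).obj (cot C).obj) : Prop :=
  S.hcomp fbar (cot C).src = S.hcomp (cot A).src f ∧
  S.hcomp fbar (cot C).tgt = S.hcomp (cot A).tgt f ∧
  S.hcomp (unitOf cot A) fbar = S.hcomp f (unitOf cot C) ∧
  ∀ {X : S.Obj} (h₁ h₂ : S.Hom X (cot A).obj)
    (w : S.hcomp h₁ (cot A).tgt = S.hcomp h₂ (cot A).src)
    (w' : S.hcomp (S.hcomp h₁ fbar) (cot C).tgt = S.hcomp (S.hcomp h₂ fbar) (cot C).src),
    S.hcomp (compOf cot A h₁ h₂ w) fbar = compOf cot C (S.hcomp h₁ fbar) (S.hcomp h₂ fbar) w'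

/-- `ψ : A → C^2` is an internal transformation `(f, f̄) ⇒ (g, ḡ)` (elementwise form):
it is a morphism of spans satisfying the external equivariance axiom
`γ̄∘(f̄, ψ∘tgt) = γ̄∘(ψ∘src, ḡ)`. -/
def IsInternalTransfOf {A C : S.Obj} (f g : S.Hom A C) (ψ : S.Hom A (cot C).obj) : Prop :=
  S.hcomp ψ (cot C).src = f ∧ S.hcomp ψ (cot C).tgt = g ∧
  ∀ (w : S.hcomp (barOf cot f) (cot C).tgt
        = S.hcomp (S.hcomp (cot A).tgt ψ) (cot C).src)
    (w' : S.hcomp (S.hcomp (cot A).src ψ) (cot C).tgt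
        = S.hcomp (barOf cot g) (cot C).src),
    compOf cot C (barOf cot f) (S.hcomp (cot A).tgt ψ) w
      = compOf cot C (S.hcomp (cot A).src ψ) (barOf cot g) w'

/- ## Auxiliary infrastructure -/

theorem Cotensor.factor_src {A : S.Obj} (c : Cotensor S A) {X : S.Obj}
    {φA φB : S.Hom X A} (φ : S.Cell φA φB) : S.hcomp (c.factor φ) c.src = φA :=
  (c.up φA φB φ).exists.choose_spec.1

theorem Cotensor.factor_tgt {A : S.Obj} (c : Cotensor S A) {X : S.Obj}
    {φA φB : S.Hom X A} (φ : S.Cell φA φB) : S.hcomp (c.factor φ) c.tgt = φB :=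
  (c.up φA φB φ).exists.choose_spec.2.1

theorem Cotensor.factor_wl {A : S.Obj} (c : Cotensor S A) {X : S.Obj}
    {φA φB : S.Hom X A} (φ : S.Cell φA φB) : HEq (S.wl (c.factor φ) c.δ) φ :=
  (c.up φA φB φ).exists.choose_spec.2.2

/-- Two morphisms into a cotensor agree iff they agree after composing with the
projections and whiskering with the universal cell. -/
theorem cot_hom_ext {A : S.Obj} (c : Cotensor S A) {X : S.Obj}
    {u u' : S.Hom X c.obj}
    (hs : S.hcomp u c.src = S.hcomp u' c.src)
    (ht : S.hcomp u c.tgt = S.hcomp u' c.tgt)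
    (hδ : HEq (S.wl u c.δ) (S.wl u' c.δ)) : u = u' :=
  (c.up _ _ (S.wl u c.δ)).unique ⟨rfl, rfl, HEq.rfl⟩ ⟨hs.symm, ht.symm, hδ.symm⟩

theorem heq_vcomp {A B : S.Obj} {f g h f' g' h' : S.Hom A B}
    (hf : f = f') (hg : g = g') (hh : h = h')
    {φ : S.Cell f g} {φ' : S.Cell f' g'} {ψ : S.Cell g h} {ψ' : S.Cell g' h'}
    (h1 : HEq φ φ') (h2 : HEq ψ ψ') : HEq (S.vcomp φ ψ) (S.vcomp φ' ψ') := by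
  subst hf; subst hg; subst hh
  rw [eq_of_heq h1, eq_of_heq h2]

theorem heq_wl {A B C : S.Obj} {f f' : S.Hom A B} (hf : f = f')
    {g h g' h' : S.Hom B C} (hg : g = g') (hh : h = h')
    {φ : S.Cell g h} {φ' : S.Cell g' h'} (hφ : HEq φ φ') :
    HEq (S.wl f φ) (S.wl f' φ') := by
  subst hf; subst hg; subst hh
  rw [eq_of_heq hφ]

theorem heq_wr {A B C : S.Obj} {f g f' g' : S.Hom A B} (hf : f = f') (hg : g = g')
    {h h' : S.Hom B C} (hh : h = h')
    {φ : S.Cell f g} {φ' : S.Cell f' g'} (hφ : HEq φ φ') :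
    HEq (S.wr φ h) (S.wr φ' h') := by
  subst hf; subst hg; subst hh
  rw [eq_of_heq hφ]

theorem heq_cid {A B : S.Obj} {f f' : S.Hom A B} (hf : f = f') :
    HEq (S.cid f) (S.cid f') := by subst hf; rfl

theorem unitOf_src (A : S.Obj) : S.hcomp (unitOf cot A) (cot A).src = S.hid A :=
  (cot A).factor_src _

theorem unitOf_tgt (A : S.Obj) : S.hcomp (unitOf cot A) (cot A).tgt = S.hid A :=
  (cot A).factor_tgt _

theorem unitOf_wl (A : S.Obj) :
    HEq (S.wl (unitOf cot A) (cot A).δ) (S.cid (S.hid A)) :=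
  (cot A).factor_wl _

theorem compOf_src (A : S.Obj) {X : S.Obj} (h₁ h₂ : S.Hom X (cot A).obj)
    (w : S.hcomp h₁ (cot A).tgt = S.hcomp h₂ (cot A).src) :
    S.hcomp (compOf cot A h₁ h₂ w) (cot A).src = S.hcomp h₁ (cot A).src :=
  (cot A).factor_src _

theorem compOf_tgt (A : S.Obj) {X : S.Obj} (h₁ h₂ : S.Hom X (cot A).obj)
    (w : S.hcomp h₁ (cot A).tgt = S.hcomp h₂ (cot A).src) :
    S.hcomp (compOf cot A h₁ h₂ w) (cot A).tgt = S.hcomp h₂ (cot A).tgt :=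
  (cot A).factor_tgt _

/-- The universal cell of a canonical composite, compared against an arbitrary
vertical composite. -/
theorem compOf_wl_heq (A : S.Obj) {X : S.Obj} (h₁ h₂ : S.Hom X (cot A).obj)
    (w : S.hcomp h₁ (cot A).tgt = S.hcomp h₂ (cot A).src)
    {p q r : S.Hom X A} {φ : S.Cell p q} {ψ : S.Cell q r}
    (hp : S.hcomp h₁ (cot A).src = p) (hq : S.hcomp h₂ (cot A).src = q)
    (hr : S.hcomp h₂ (cot A).tgt = r)
    (hφ : HEq (S.wl h₁ (cot A).δ) φ) (hψ : HEq (S.wl h₂ (cot A).δ) ψ) :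
    HEq (S.wl (compOf cot A h₁ h₂ w) (cot A).δ) (S.vcomp φ ψ) :=
  ((cot A).factor_wl _).trans
    (heq_vcomp hp (w.trans hq) hr hφ ((cast_heq _ _).trans hψ))

theorem barOf_src {A C : S.Obj} (f : S.Hom A C) :
    S.hcomp (barOf cot f) (cot C).src = S.hcomp (cot A).src f :=
  (cot C).factor_src _

theorem barOf_tgt {A C : S.Obj} (f : S.Hom A C) :
    S.hcomp (barOf cot f) (cot C).tgt = S.hcomp (cot A).tgt f :=
  (cot C).factor_tgt _

theorem barOf_wl {A C : S.Obj} (f : S.Hom A C) :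
    HEq (S.wl (barOf cot f) (cot C).δ) (S.wr (cot A).δ f) :=
  (cot C).factor_wl _

theorem cellOf_src {A C : S.Obj} {f g : S.Hom A C} (φ : S.Cell f g) :
    S.hcomp (cellOf cot φ) (cot C).src = f :=
  (cot C).factor_src _

theorem cellOf_tgt {A C : S.Obj} {f g : S.Hom A C} (φ : S.Cell f g) :
    S.hcomp (cellOf cot φ) (cot C).tgt = g :=
  (cot C).factor_tgt _

theorem cellOf_wl {A C : S.Obj} {f g : S.Hom A C} (φ : S.Cell f g) :
    HEq (S.wl (cellOf cot φ) (cot C).δ) φ :=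
  (cot C).factor_wl _

-- scratch: helper lemmas, to be appended into proof.lean before the theorem
theorem compOf_unique (A : S.Obj) {X : S.Obj} (h₁ h₂ : S.Hom X (cot A).obj)
    (w : S.hcomp h₁ (cot A).tgt = S.hcomp h₂ (cot A).src) (u : S.Hom X (cot A).obj)
    {p q r : S.Hom X A} {φ : S.Cell p q} {ψ : S.Cell q r}
    (hp : S.hcomp h₁ (cot A).src = p) (hq : S.hcomp h₂ (cot A).src = q)
    (hr : S.hcomp h₂ (cot A).tgt = r)
    (hφ : HEq (S.wl h₁ (cot A).δ) φ) (hψ : HEq (S.wl h₂ (cot A).δ) ψ)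
    (hs : S.hcomp u (cot A).src = S.hcomp h₁ (cot A).src)
    (ht : S.hcomp u (cot A).tgt = S.hcomp h₂ (cot A).tgt)
    (hδ : HEq (S.wl u (cot A).δ) (S.vcomp φ ψ)) :
    u = compOf cot A h₁ h₂ w :=
  cot_hom_ext (cot A) (hs.trans (compOf_src cot A h₁ h₂ w).symm)
    (ht.trans (compOf_tgt cot A h₁ h₂ w).symm)
    (hδ.trans (compOf_wl_heq cot A h₁ h₂ w hp hq hr hφ hψ).symm)

/-- The universal cell of `x ∘ (h₁ ⋆ h₂)` compared against a vertical composite. -/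
theorem wl_hcomp_compOf_heq (A : S.Obj) {X Y : S.Obj} (x : S.Hom Y X)
    (h₁ h₂ : S.Hom X (cot A).obj)
    (w : S.hcomp h₁ (cot A).tgt = S.hcomp h₂ (cot A).src)
    {p q r : S.Hom Y A} {φ : S.Cell p q} {ψ : S.Cell q r}
    (hp : S.hcomp (S.hcomp x h₁) (cot A).src = p)
    (hq : S.hcomp (S.hcomp x h₂) (cot A).src = q)
    (hr : S.hcomp (S.hcomp x h₂) (cot A).tgt = r)
    (hφ : HEq (S.wl (S.hcomp x h₁) (cot A).δ) φ)
    (hψ : HEq (S.wl (S.hcomp x h₂) (cot A).δ) ψ) :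
    HEq (S.wl (S.hcomp x (compOf cot A h₁ h₂ w)) (cot A).δ) (S.vcomp φ ψ) := by
  refine ((S.wl_wl x (compOf cot A h₁ h₂ w) (cot A).δ).symm).trans ?_
  refine HEq.trans (heq_wl rfl (compOf_src cot A h₁ h₂ w) (compOf_tgt cot A h₁ h₂ w)
    ((cot A).factor_wl _)) ?_
  rw [S.wl_vcomp]
  refine heq_vcomp (by rw [← S.hassoc]; exact hp)
    (by rw [w, ← S.hassoc]; exact hq)
    (by rw [← S.hassoc]; exact hr)
    ((S.wl_wl x h₁ _).trans hφ)
    (((heq_wl rfl w rfl (cast_heq _ _)).trans (S.wl_wl x h₂ _)).trans hψ)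

/-- Transport a cell along equalities of its boundary morphisms. -/
def castCell {A B : S.Obj} {f g f' g' : S.Hom A B} (hf : f = f') (hg : g = g')
    (φ : S.Cell f g) : S.Cell f' g' :=
  cast (by rw [hf, hg]) φ

theorem castCell_heq {A B : S.Obj} {f g f' g' : S.Hom A B} (hf : f = f') (hg : g = g')
    (φ : S.Cell f g) : HEq (castCell hf hg φ) φ :=
  cast_heq _ _

theorem isInternalCat_aux (A : S.Obj) :
    IsInternalCat S (cot A).src (cot A).tgt (unitOf cot A)
      (fun h₁ h₂ w => compOf cot A h₁ h₂ w) where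
  unit_src := unitOf_src cot A
  unit_tgt := unitOf_tgt cot A
  comp_src h₁ h₂ w := compOf_src cot A h₁ h₂ w
  comp_tgt h₁ h₂ w := compOf_tgt cot A h₁ h₂ w
  comp_natural := by
    intro X Y x h₁ h₂ w w'
    refine (compOf_unique cot A _ _ w' (S.hcomp x (compOf cot A h₁ h₂ w))
      (φ := castCell rfl w' (S.wl (S.hcomp x h₁) (cot A).δ))
      (ψ := S.wl (S.hcomp x h₂) (cot A).δ)
      rfl rfl rfl (castCell_heq _ _ _).symm HEq.rfl ?_ ?_ ?_).symm
    · rw [S.hassoc, compOf_src cot A h₁ h₂ w, ← S.hassoc]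
    · rw [S.hassoc, compOf_tgt cot A h₁ h₂ w, ← S.hassoc]
    · exact wl_hcomp_compOf_heq cot A x h₁ h₂ w rfl rfl rfl
        (castCell_heq _ _ _).symm HEq.rfl
  comp_unit_left := by
    intro X h w
    refine (compOf_unique cot A _ _ w h
      (φ := S.cid (S.hcomp h (cot A).src)) (ψ := S.wl h (cot A).δ)
      ?_ rfl rfl ?_ HEq.rfl ?_ rfl ((S.cid_vcomp _).symm ▸ HEq.rfl)).symm
    · rw [S.hassoc, unitOf_src cot A, S.comp_hid]
    · refine ((S.wl_wl (S.hcomp h (cot A).src) (unitOf cot A) (cot A).δ).symm).trans ?_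
      refine (heq_wl rfl (unitOf_src cot A) (unitOf_tgt cot A) (unitOf_wl cot A)).trans ?_
      exact (heq_of_eq (S.wl_cid _ _)).trans (heq_cid (S.comp_hid _))
    · rw [S.hassoc, unitOf_src cot A, S.comp_hid]
  comp_unit_right := by
    intro X h w
    refine (compOf_unique cot A _ _ w h
      (φ := S.wl h (cot A).δ) (ψ := S.cid (S.hcomp h (cot A).tgt))
      rfl ?_ ?_ HEq.rfl ?_ rfl ?_ ((S.vcomp_cid _).symm ▸ HEq.rfl)).symm
    · rw [S.hassoc, unitOf_src cot A, S.comp_hid]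
    · rw [S.hassoc, unitOf_tgt cot A, S.comp_hid]
    · refine ((S.wl_wl (S.hcomp h (cot A).tgt) (unitOf cot A) (cot A).δ).symm).trans ?_
      refine (heq_wl rfl (unitOf_src cot A) (unitOf_tgt cot A) (unitOf_wl cot A)).trans ?_
      exact (heq_of_eq (S.wl_cid _ _)).trans (heq_cid (S.comp_hid _))
    · rw [S.hassoc, unitOf_tgt cot A, S.comp_hid]
  comp_assoc := by
    intro X h₁ h₂ h₃ w₁₂ w₂₃ w w'
    have c₁ := S.wl h₁ (cot A).δ
    refine cot_hom_ext (cot A) ?_ ?_ ?_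
    · rw [compOf_src, compOf_src, compOf_src]
    · rw [compOf_tgt, compOf_tgt, compOf_tgt]
    · refine (compOf_wl_heq cot A _ h₃ w
        (φ := S.vcomp (S.wl h₁ (cot A).δ) (castCell w₁₂.symm rfl (S.wl h₂ (cot A).δ)))
        (ψ := castCell w₂₃.symm rfl (S.wl h₃ (cot A).δ))
        (compOf_src cot A h₁ h₂ w₁₂) w₂₃.symm rfl
        (compOf_wl_heq cot A h₁ h₂ w₁₂ rfl w₁₂.symm rfl HEq.rfl
          (castCell_heq _ _ _).symm)
        (castCell_heq _ _ _).symm).trans ?_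
      refine (heq_of_eq (S.vassoc _ _ _)).trans ?_
      refine (compOf_wl_heq cot A h₁ _ w'
        (φ := S.wl h₁ (cot A).δ)
        (ψ := S.vcomp (castCell w₁₂.symm rfl (S.wl h₂ (cot A).δ))
          (castCell w₂₃.symm rfl (S.wl h₃ (cot A).δ)))
        rfl ((compOf_src cot A h₂ h₃ w₂₃).trans w₁₂.symm) (compOf_tgt cot A h₂ h₃ w₂₃)
        HEq.rfl
        (compOf_wl_heq cot A h₂ h₃ w₂₃ w₁₂.symm w₂₃.symm rfl
          (castCell_heq _ _ _).symm (castCell_heq _ _ _).symm)).symm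

theorem wl_hcomp_barOf_heq {A C X : S.Obj} (h : S.Hom X (cot A).obj) (f : S.Hom A C) :
    HEq (S.wl (S.hcomp h (barOf cot f)) (cot C).δ) (S.wr (S.wl h (cot A).δ) f) :=
  ((S.wl_wl h (barOf cot f) (cot C).δ).symm).trans
    ((heq_wl rfl (barOf_src cot f) (barOf_tgt cot f) (barOf_wl cot f)).trans
      (S.wl_wr h (cot A).δ f).symm)

theorem isInternalFunctor_aux {A C : S.Obj} (f : S.Hom A C) :
    IsInternalFunctorOf cot f (barOf cot f) := by
  refine ⟨barOf_src cot f, barOf_tgt cot f, ?_, ?_⟩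
  · refine cot_hom_ext (cot C) ?_ ?_ ?_
    · rw [S.hassoc, barOf_src cot f, ← S.hassoc, unitOf_src cot A, S.hid_comp,
        S.hassoc, unitOf_src cot C, S.comp_hid]
    · rw [S.hassoc, barOf_tgt cot f, ← S.hassoc, unitOf_tgt cot A, S.hid_comp,
        S.hassoc, unitOf_tgt cot C, S.comp_hid]
    · refine ((wl_hcomp_barOf_heq cot (unitOf cot A) f).trans ?_).trans
        (((S.wl_wl f (unitOf cot C) (cot C).δ).symm).trans
          ((heq_wl rfl (unitOf_src cot C) (unitOf_tgt cot C) (unitOf_wl cot C)).trans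
            ((heq_of_eq (S.wl_cid f _)).trans (heq_cid (S.comp_hid f))))).symm
      refine (heq_wr (unitOf_src cot A) (unitOf_tgt cot A) rfl (unitOf_wl cot A)).trans ?_
      exact (heq_of_eq (S.wr_cid _ f)).trans (heq_cid (S.hid_comp f))
  · intro X h₁ h₂ w w'
    refine compOf_unique cot C _ _ w' (S.hcomp (compOf cot A h₁ h₂ w) (barOf cot f))
      (φ := S.wr (S.wl h₁ (cot A).δ) f)
      (ψ := S.wr (castCell w.symm rfl (S.wl h₂ (cot A).δ)) f)
      ?_ ?_ ?_ (wl_hcomp_barOf_heq cot h₁ f)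
      ((wl_hcomp_barOf_heq cot h₂ f).trans
        (heq_wr w.symm rfl rfl (castCell_heq _ _ _).symm)) ?_ ?_ ?_
    · rw [S.hassoc, barOf_src cot f, ← S.hassoc]
    · rw [S.hassoc, barOf_src cot f, ← S.hassoc, ← w]
    · rw [S.hassoc, barOf_tgt cot f, ← S.hassoc]
    · rw [S.hassoc, S.hassoc, barOf_src cot f, ← S.hassoc, ← S.hassoc,
        compOf_src cot A h₁ h₂ w]
    · rw [S.hassoc, S.hassoc, barOf_tgt cot f, ← S.hassoc, ← S.hassoc,
        compOf_tgt cot A h₁ h₂ w]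
    · refine ((S.wl_wl (compOf cot A h₁ h₂ w) (barOf cot f) (cot C).δ).symm).trans ?_
      refine (heq_wl rfl (barOf_src cot f) (barOf_tgt cot f) (barOf_wl cot f)).trans ?_
      refine ((S.wl_wr (compOf cot A h₁ h₂ w) (cot A).δ f).symm).trans ?_
      refine (heq_wr (compOf_src cot A h₁ h₂ w) (compOf_tgt cot A h₁ h₂ w) rfl
        (compOf_wl_heq cot A h₁ h₂ w (φ := S.wl h₁ (cot A).δ)
          (ψ := castCell w.symm rfl (S.wl h₂ (cot A).δ)) rfl w.symm rfl HEq.rfl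
          (castCell_heq w.symm rfl _).symm)).trans ?_
      exact heq_of_eq (S.wr_vcomp _ _ f)

theorem barOf_hid (A : S.Obj) : barOf cot (S.hid A) = S.hid (cot A).obj := by
  refine cot_hom_ext (cot A) ?_ ?_ ?_
  · rw [barOf_src cot (S.hid A), S.comp_hid, S.hid_comp]
  · rw [barOf_tgt cot (S.hid A), S.comp_hid, S.hid_comp]
  · exact ((barOf_wl cot (S.hid A)).trans (S.wr_hid _)).trans (S.wl_hid _).symm

theorem barOf_hcomp {A C E : S.Obj} (f : S.Hom A C) (g : S.Hom C E) :
    barOf cot (S.hcomp f g) = S.hcomp (barOf cot f) (barOf cot g) := by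
  refine cot_hom_ext (cot E) ?_ ?_ ?_
  · rw [barOf_src cot (S.hcomp f g), S.hassoc, barOf_src cot g,
      ← S.hassoc (barOf cot f) (cot C).src g, barOf_src cot f, S.hassoc]
  · rw [barOf_tgt cot (S.hcomp f g), S.hassoc, barOf_tgt cot g,
      ← S.hassoc (barOf cot f) (cot C).tgt g, barOf_tgt cot f, S.hassoc]
  · refine (barOf_wl cot (S.hcomp f g)).trans ?_
    refine (HEq.symm ?_)
    refine ((S.wl_wl (barOf cot f) (barOf cot g) (cot E).δ).symm).trans ?_
    refine (heq_wl rfl (barOf_src cot g) (barOf_tgt cot g) (barOf_wl cot g)).trans ?_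
    refine ((S.wl_wr (barOf cot f) (cot C).δ g).symm).trans ?_
    refine (heq_wr (barOf_src cot f) (barOf_tgt cot f) rfl (barOf_wl cot f)).trans ?_
    exact S.wr_wr (cot A).δ f g

theorem cellOf_cid {A C : S.Obj} (f : S.Hom A C) :
    cellOf cot (S.cid f) = S.hcomp f (unitOf cot C) := by
  refine cot_hom_ext (cot C) ?_ ?_ ?_
  · rw [cellOf_src cot (S.cid f), S.hassoc, unitOf_src cot C, S.comp_hid]
  · rw [cellOf_tgt cot (S.cid f), S.hassoc, unitOf_tgt cot C, S.comp_hid]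
  · refine (cellOf_wl cot (S.cid f)).trans (HEq.symm ?_)
    refine ((S.wl_wl f (unitOf cot C) (cot C).δ).symm).trans ?_
    refine (heq_wl rfl (unitOf_src cot C) (unitOf_tgt cot C) (unitOf_wl cot C)).trans ?_
    exact (heq_of_eq (S.wl_cid f _)).trans (heq_cid (S.comp_hid f))

theorem cellOf_vcomp {A C : S.Obj} {f g h : S.Hom A C} (φ : S.Cell f g) (ψ : S.Cell g h)
    (w : S.hcomp (cellOf cot φ) (cot C).tgt = S.hcomp (cellOf cot ψ) (cot C).src) :
    cellOf cot (S.vcomp φ ψ) = compOf cot C (cellOf cot φ) (cellOf cot ψ) w :=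
  compOf_unique cot C _ _ w _ (cellOf_src cot φ) (cellOf_src cot ψ) (cellOf_tgt cot ψ)
    (cellOf_wl cot φ) (cellOf_wl cot ψ)
    ((cellOf_src cot (S.vcomp φ ψ)).trans (cellOf_src cot φ).symm)
    ((cellOf_tgt cot (S.vcomp φ ψ)).trans (cellOf_tgt cot ψ).symm)
    (cellOf_wl cot (S.vcomp φ ψ))

theorem cellOf_wl_eq {X A C : S.Obj} (e : S.Hom X A) {f g : S.Hom A C} (φ : S.Cell f g) :
    cellOf cot (S.wl e φ) = S.hcomp e (cellOf cot φ) := by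
  refine cot_hom_ext (cot C) ?_ ?_ ?_
  · rw [cellOf_src cot (S.wl e φ), S.hassoc, cellOf_src cot φ]
  · rw [cellOf_tgt cot (S.wl e φ), S.hassoc, cellOf_tgt cot φ]
  · refine (cellOf_wl cot (S.wl e φ)).trans (HEq.symm ?_)
    exact ((S.wl_wl e (cellOf cot φ) (cot C).δ).symm).trans
      (heq_wl rfl (cellOf_src cot φ) (cellOf_tgt cot φ) (cellOf_wl cot φ))

theorem cellOf_wr_eq {A C E : S.Obj} {f g : S.Hom A C} (φ : S.Cell f g) (h : S.Hom C E) :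
    cellOf cot (S.wr φ h) = S.hcomp (cellOf cot φ) (barOf cot h) := by
  refine cot_hom_ext (cot E) ?_ ?_ ?_
  · rw [cellOf_src cot (S.wr φ h), S.hassoc, barOf_src cot h, ← S.hassoc,
      cellOf_src cot φ]
  · rw [cellOf_tgt cot (S.wr φ h), S.hassoc, barOf_tgt cot h, ← S.hassoc,
      cellOf_tgt cot φ]
  · refine (cellOf_wl cot (S.wr φ h)).trans (HEq.symm ?_)
    exact (wl_hcomp_barOf_heq cot (cellOf cot φ) h).trans
      (heq_wr (cellOf_src cot φ) (cellOf_tgt cot φ) rfl (cellOf_wl cot φ))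

theorem cellOf_injective {A C : S.Obj} {f g : S.Hom A C} (φ φ' : S.Cell f g)
    (h : cellOf cot φ = cellOf cot φ') : φ = φ' := by
  apply eq_of_heq
  refine (cellOf_wl cot φ).symm.trans ?_
  rw [h]
  exact cellOf_wl cot φ'

theorem isInternalTransf_aux {A C : S.Obj} {f g : S.Hom A C} (φ : S.Cell f g)
    (hφ : S.IsStrict φ) : IsInternalTransfOf cot f g (cellOf cot φ) := by
  refine ⟨cellOf_src cot φ, cellOf_tgt cot φ, ?_⟩
  intro w w'
  refine cot_hom_ext (cot C) ?_ ?_ ?_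
  · rw [compOf_src, compOf_src, barOf_src cot f, S.hassoc, cellOf_src cot φ]
  · rw [compOf_tgt, compOf_tgt, barOf_tgt cot g, S.hassoc, cellOf_tgt cot φ]
  · refine (compOf_wl_heq cot C (barOf cot f) _ w
      (φ := S.wr (cot A).δ f) (ψ := S.wl (cot A).tgt φ)
      (barOf_src cot f) (by rw [S.hassoc, cellOf_src cot φ])
      (by rw [S.hassoc, cellOf_tgt cot φ])
      (barOf_wl cot f)
      ((S.wl_wl (cot A).tgt (cellOf cot φ) (cot C).δ).symm.trans
        (heq_wl rfl (cellOf_src cot φ) (cellOf_tgt cot φ) (cellOf_wl cot φ)))).trans ?_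
    refine HEq.trans (heq_of_eq (hφ (cot A).δ)) ?_
    refine HEq.symm (compOf_wl_heq cot C _ (barOf cot g) w'
      (φ := S.wl (cot A).src φ) (ψ := S.wr (cot A).δ g)
      (by rw [S.hassoc, cellOf_src cot φ]) (barOf_src cot g) (barOf_tgt cot g)
      ((S.wl_wl (cot A).src (cellOf cot φ) (cot C).δ).symm.trans
        (heq_wl rfl (cellOf_src cot φ) (cellOf_tgt cot φ) (cellOf_wl cot φ)))
      (barOf_wl cot g))

theorem transf_bijective {A C : S.Obj} (f g : S.Hom A C) (ψ : S.Hom A (cot C).obj)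
    (hψ : IsInternalTransfOf cot f g ψ) :
    ∃! φ : { φ : S.Cell f g // S.IsStrict φ }, cellOf cot φ.1 = ψ := by
  obtain ⟨hsrc, htgt, hequiv⟩ := hψ
  have hcell : cellOf cot (castCell hsrc htgt (S.wl ψ (cot C).δ)) = ψ :=
    cot_hom_ext (cot C)
      ((cellOf_src cot _).trans hsrc.symm)
      ((cellOf_tgt cot _).trans htgt.symm)
      ((cellOf_wl cot _).trans (castCell_heq hsrc htgt _))
  have hstrict : S.IsStrict (castCell hsrc htgt (S.wl ψ (cot C).δ)) := by
    intro X a b χ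
    have hx1 : S.hcomp ((cot A).factor χ) (cot A).src = a := (cot A).factor_src χ
    have hx2 : S.hcomp ((cot A).factor χ) (cot A).tgt = b := (cot A).factor_tgt χ
    have hx3 : HEq (S.wl ((cot A).factor χ) (cot A).δ) χ := (cot A).factor_wl χ
    have w : S.hcomp (barOf cot f) (cot C).tgt
        = S.hcomp (S.hcomp (cot A).tgt ψ) (cot C).src := by
      rw [barOf_tgt cot f, S.hassoc, hsrc]
    have w' : S.hcomp (S.hcomp (cot A).src ψ) (cot C).tgt
        = S.hcomp (barOf cot g) (cot C).src := by
      rw [barOf_src cot g, S.hassoc, htgt]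
    have heq := hequiv w w'
    have key1 : HEq
        (S.wl (S.hcomp ((cot A).factor χ)
          (compOf cot C (barOf cot f) (S.hcomp (cot A).tgt ψ) w)) (cot C).δ)
        (S.vcomp (S.wr χ f) (S.wl b (castCell hsrc htgt (S.wl ψ (cot C).δ)))) := by
      refine wl_hcomp_compOf_heq cot C ((cot A).factor χ) (barOf cot f)
        (S.hcomp (cot A).tgt ψ) w ?_ ?_ ?_
        ((wl_hcomp_barOf_heq cot ((cot A).factor χ) f).trans (heq_wr hx1 hx2 rfl hx3))
        ((heq_wl (by rw [← S.hassoc, hx2]) rfl rfl HEq.rfl).trans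
          ((S.wl_wl b ψ (cot C).δ).symm.trans
            (heq_wl rfl hsrc htgt (castCell_heq hsrc htgt _).symm)))
      · rw [S.hassoc, barOf_src cot f, ← S.hassoc, hx1]
      · rw [S.hassoc, S.hassoc, hsrc, ← S.hassoc, hx2]
      · rw [S.hassoc, S.hassoc, htgt, ← S.hassoc, hx2]
    have key2 : HEq
        (S.wl (S.hcomp ((cot A).factor χ)
          (compOf cot C (S.hcomp (cot A).src ψ) (barOf cot g) w')) (cot C).δ)
        (S.vcomp (S.wl a (castCell hsrc htgt (S.wl ψ (cot C).δ))) (S.wr χ g)) := by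
      refine wl_hcomp_compOf_heq cot C ((cot A).factor χ) (S.hcomp (cot A).src ψ)
        (barOf cot g) w' ?_ ?_ ?_
        ((heq_wl (by rw [← S.hassoc, hx1]) rfl rfl HEq.rfl).trans
          ((S.wl_wl a ψ (cot C).δ).symm.trans
            (heq_wl rfl hsrc htgt (castCell_heq hsrc htgt _).symm)))
        ((wl_hcomp_barOf_heq cot ((cot A).factor χ) g).trans (heq_wr hx1 hx2 rfl hx3))
      · rw [S.hassoc, S.hassoc, hsrc, ← S.hassoc, hx1]
      · rw [S.hassoc, barOf_src cot g, ← S.hassoc, hx1]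
      · rw [S.hassoc, barOf_tgt cot g, ← S.hassoc, hx2]
    refine eq_of_heq (key1.symm.trans ?_)
    rw [heq]
    exact key2
  refine ⟨⟨castCell hsrc htgt (S.wl ψ (cot C).δ), hstrict⟩, hcell, ?_⟩
  rintro ⟨φ', hs'⟩ h'
  exact Subtype.ext (cellOf_injective cot φ' _ (h'.trans hcell.symm))

/-- Let `S` be a sesquicategory with chosen iterated conical pullbacks and 2-cotensors.
For each object `A` the span `src, tgt : A^2 → A` together with the canonical
composition `ᾱ` and unit `α̃` (obtained by unique factorization through the universal
cell `δ`) forms a category internal to the underlying 1-category of `S`.  Moreover the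
assignment `A ↦ (A, A^2, ᾱ, α̃)` extends to a 2-functor from the wide sub-2-category
`S_str` of strict cells of `S` to the 2-category `Cat(|S|)` of internal categories,
sending `f : A → C` to `(f, f̄)` and a strict cell `φ : f ⇒ g` to the internal
transformation `φ^2`; this 2-functor is faithful and locally full: it is injective on
morphisms and induces bijections between strict cells `f ⇒ g` and internal
transformations `(f, f̄) ⇒ (g, ḡ)`. -/
theorem internal_categories_from_cotensors
    (S : Sesquicat.{u, v, w})
    -- chosen iterated (binary suffices here) conical pullbacks:
    (pbObj : ∀ {X Y Z : S.Obj}, S.Hom X Z → S.Hom Y Z → S.Obj)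
    (pbFst : ∀ {X Y Z : S.Obj} (f : S.Hom X Z) (g : S.Hom Y Z), S.Hom (pbObj f g) X)
    (pbSnd : ∀ {X Y Z : S.Obj} (f : S.Hom X Z) (g : S.Hom Y Z), S.Hom (pbObj f g) Y)
    (pbComm : ∀ {X Y Z : S.Obj} (f : S.Hom X Z) (g : S.Hom Y Z),
      S.hcomp (pbFst f g) f = S.hcomp (pbSnd f g) g)
    (pbUP : ∀ {X Y Z Q : S.Obj} (f : S.Hom X Z) (g : S.Hom Y Z)
      (q₁ : S.Hom Q X) (q₂ : S.Hom Q Y), S.hcomp q₁ f = S.hcomp q₂ g →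
      ∃! u : S.Hom Q (pbObj f g), S.hcomp u (pbFst f g) = q₁ ∧ S.hcomp u (pbSnd f g) = q₂)
    (pbUP₂ : ∀ {X Y Z Q : S.Obj} (f : S.Hom X Z) (g : S.Hom Y Z)
      (u u' : S.Hom Q (pbObj f g))
      (M₁ : S.Cell (S.hcomp u (pbFst f g)) (S.hcomp u' (pbFst f g)))
      (M₂ : S.Cell (S.hcomp u (pbSnd f g)) (S.hcomp u' (pbSnd f g))),
      HEq (S.wr M₁ f) (S.wr M₂ g) →
      ∃! M : S.Cell u u', S.wr M (pbFst f g) = M₁ ∧ S.wr M (pbSnd f g) = M₂)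
    -- chosen 2-cotensors:
    (cot : ∀ A : S.Obj, Cotensor S A) :
    -- (1) each `(A, A^2, ᾱ, α̃)` is a category internal to `|S|`
    (∀ A : S.Obj, IsInternalCat S (cot A).src (cot A).tgt (unitOf cot A)
      (fun h₁ h₂ w => compOf cot A h₁ h₂ w)) ∧
    -- (2) each `(f, f̄)` is an internal functor
    (∀ {A C : S.Obj} (f : S.Hom A C), IsInternalFunctorOf cot f (barOf cot f)) ∧
    -- (3) functoriality on morphisms (preservation of identities and composition)
    (∀ A : S.Obj, barOf cot (S.hid A) = S.hid (cot A).obj) ∧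
    (∀ {A C E : S.Obj} (f : S.Hom A C) (g : S.Hom C E),
      barOf cot (S.hcomp f g) = S.hcomp (barOf cot f) (barOf cot g)) ∧
    -- (4) each strict cell `φ : f ⇒ g` gives an internal transformation `(f,f̄) ⇒ (g,ḡ)`
    (∀ {A C : S.Obj} {f g : S.Hom A C} (φ : S.Cell f g), S.IsStrict φ →
      IsInternalTransfOf cot f g (cellOf cot φ)) ∧
    -- (5) 2-functoriality on cells: identities, vertical composition and whiskerings
    (∀ {A C : S.Obj} (f : S.Hom A C), cellOf cot (S.cid f) = S.hcomp f (unitOf cot C)) ∧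
    (∀ {A C : S.Obj} {f g h : S.Hom A C} (φ : S.Cell f g) (ψ : S.Cell g h),
      S.IsStrict φ → S.IsStrict ψ →
      ∀ (w : S.hcomp (cellOf cot φ) (cot C).tgt = S.hcomp (cellOf cot ψ) (cot C).src),
      cellOf cot (S.vcomp φ ψ) = compOf cot C (cellOf cot φ) (cellOf cot ψ) w) ∧
    (∀ {X A C : S.Obj} (e : S.Hom X A) {f g : S.Hom A C} (φ : S.Cell f g), S.IsStrict φ →
      cellOf cot (S.wl e φ) = S.hcomp e (cellOf cot φ)) ∧
    (∀ {A C E : S.Obj} {f g : S.Hom A C} (φ : S.Cell f g) (h : S.Hom C E), S.IsStrict φ →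
      cellOf cot (S.wr φ h) = S.hcomp (cellOf cot φ) (barOf cot h)) ∧
    -- (6) faithfulness: the 2-functor is injective on morphisms
    (∀ A C : S.Obj,
      Function.Injective (fun f : S.Hom A C => (f, barOf cot f))) ∧
    -- (7) local fullness: strict cells `f ⇒ g` correspond bijectively to internal
    --     transformations `(f, f̄) ⇒ (g, ḡ)`
    (∀ {A C : S.Obj} {f g : S.Hom A C} (φ φ' : S.Cell f g), S.IsStrict φ → S.IsStrict φ' →
      cellOf cot φ = cellOf cot φ' → φ = φ') ∧
    (∀ {A C : S.Obj} (f g : S.Hom A C) (ψ : S.Hom A (cot C).obj),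
      IsInternalTransfOf cot f g ψ →
      ∃! φ : { φ : S.Cell f g // S.IsStrict φ }, cellOf cot φ.1 = ψ) := by
  exact ⟨fun A => isInternalCat_aux cot A,
    fun {A C} f => isInternalFunctor_aux cot f,
    fun A => barOf_hid cot A,
    fun {A C E} f g => barOf_hcomp cot f g,
    fun {A C f g} φ hφ => isInternalTransf_aux cot φ hφ,
    fun {A C} f => cellOf_cid cot f,
    fun {A C f g h} φ ψ _ _ w => cellOf_vcomp cot φ ψ w,
    fun {X A C} e {f g} φ _ => cellOf_wl_eq cot e φ,
    fun {A C E f g} φ h _ => cellOf_wr_eq cot φ h,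
    fun A C a b h => congrArg Prod.fst h,
    fun {A C f g} φ φ' _ _ h => cellOf_injective cot φ φ' h,
    fun {A C} f g ψ hψ => transf_bijective cot f g ψ hψ⟩

end SRK
end

section
/- For a span A ←p J →q B of functors between 1-categories the following are equivalent: (a) J is a reversed split two-sided 1-fibration that jointly reflects identity morphisms; (b) J is a reversed discrete two-sided 1-fibration. In either case the cleavages are unique. -/
universe v₁ v₂ v₃ u₁ u₂ u₃

namespace SRK

open CategoryTheory

variable {A : Type u₁} [Category.{v₁} A] {B : Type u₂} [Category.{v₂} B]
  {J : Type u₃} [Category.{v₃} J]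

/-- A *reversed split two-sided 1-fibration* structure on a span `A ←p J →q B` of
functors: `p` is a split 1-opfibration via `q`-vertical opcartesian lifts
`λ(i, u) : i → u_! i` of morphisms `u : p i → a`; `q` is a split 1-fibration via
`p`-vertical cartesian lifts `ρ(v, j) : v^* j → j` of morphisms `v : b → q j`; the
splitting equations hold; and taking the two kinds of lifts commutes. -/
structure RevSplitCleavage (p : J ⥤ A) (q : J ⥤ B) where
  pushObj : (i : J) → {a : A} → (p.obj i ⟶ a) → J
  push_p_obj : ∀ (i : J) {a : A} (u : p.obj i ⟶ a), p.obj (pushObj i u) = a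
  push_q_obj : ∀ (i : J) {a : A} (u : p.obj i ⟶ a), q.obj (pushObj i u) = q.obj i
  pushLift : (i : J) → {a : A} → (u : p.obj i ⟶ a) → (i ⟶ pushObj i u)
  push_p_map : ∀ (i : J) {a : A} (u : p.obj i ⟶ a),
    p.map (pushLift i u) = u ≫ eqToHom (push_p_obj i u).symm
  push_q_map : ∀ (i : J) {a : A} (u : p.obj i ⟶ a),
    q.map (pushLift i u) = eqToHom (push_q_obj i u).symm
  -- the lifts are opcartesian
  push_opcart : ∀ {i j : J} {a : A} (u : p.obj i ⟶ a) (s : i ⟶ j) (v : a ⟶ p.obj j),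
    p.map s = u ≫ v →
    ∃! vt : pushObj i u ⟶ j,
      p.map vt = eqToHom (push_p_obj i u) ≫ v ∧ pushLift i u ≫ vt = s
  -- splitting equations for `λ`
  push_comp_obj : ∀ (i : J) {a a' : A} (u : p.obj i ⟶ a) (v : a ⟶ a'),
    pushObj i (u ≫ v) = pushObj (pushObj i u) (eqToHom (push_p_obj i u) ≫ v)
  push_comp_mor : ∀ (i : J) {a a' : A} (u : p.obj i ⟶ a) (v : a ⟶ a'),
    pushLift i (u ≫ v)
      = pushLift i u ≫ pushLift (pushObj i u) (eqToHom (push_p_obj i u) ≫ v)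
        ≫ eqToHom (push_comp_obj i u v).symm
  push_id_obj : ∀ i : J, pushObj i (𝟙 (p.obj i)) = i
  push_id_mor : ∀ i : J, pushLift i (𝟙 (p.obj i)) = eqToHom (push_id_obj i).symm
  pullObj : {b : B} → (j : J) → (b ⟶ q.obj j) → J
  pull_q_obj : ∀ {b : B} (j : J) (v : b ⟶ q.obj j), q.obj (pullObj j v) = b
  pull_p_obj : ∀ {b : B} (j : J) (v : b ⟶ q.obj j), p.obj (pullObj j v) = p.obj j
  pullLift : {b : B} → (j : J) → (v : b ⟶ q.obj j) → (pullObj j v ⟶ j)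
  pull_q_map : ∀ {b : B} (j : J) (v : b ⟶ q.obj j),
    q.map (pullLift j v) = eqToHom (pull_q_obj j v) ≫ v
  pull_p_map : ∀ {b : B} (j : J) (v : b ⟶ q.obj j),
    p.map (pullLift j v) = eqToHom (pull_p_obj j v)
  -- the lifts are cartesian
  pull_cart : ∀ {i j : J} {b : B} (v : b ⟶ q.obj j) (s : i ⟶ j) (w : q.obj i ⟶ b),
    q.map s = w ≫ v →
    ∃! wt : i ⟶ pullObj j v,
      q.map wt = w ≫ eqToHom (pull_q_obj j v).symm ∧ wt ≫ pullLift j v = s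
  -- splitting equations for `ρ`
  pull_comp_obj : ∀ {b b' : B} (j : J) (v : b ⟶ q.obj j) (w : b' ⟶ b),
    pullObj j (w ≫ v) = pullObj (pullObj j v) (w ≫ eqToHom (pull_q_obj j v).symm)
  pull_comp_mor : ∀ {b b' : B} (j : J) (v : b ⟶ q.obj j) (w : b' ⟶ b),
    pullLift j (w ≫ v)
      = eqToHom (pull_comp_obj j v w)
        ≫ pullLift (pullObj j v) (w ≫ eqToHom (pull_q_obj j v).symm) ≫ pullLift j v
  pull_id_obj : ∀ j : J, pullObj j (𝟙 (q.obj j)) = j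
  pull_id_mor : ∀ j : J, pullLift j (𝟙 (q.obj j)) = eqToHom (pull_id_obj j)
  -- taking the two kinds of lifts commutes
  cl_obj : ∀ (i : J) {a : A} {b : B} (u : p.obj i ⟶ a) (v : b ⟶ q.obj i),
    pushObj (pullObj i v) (eqToHom (pull_p_obj i v) ≫ u)
      = pullObj (pushObj i u) (v ≫ eqToHom (push_q_obj i u).symm)
  cl_mor : ∀ (i : J) {a : A} {b : B} (u : p.obj i ⟶ a) (v : b ⟶ q.obj i),
    pullLift i v ≫ pushLift i u
      = pushLift (pullObj i v) (eqToHom (pull_p_obj i v) ≫ u)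
        ≫ eqToHom (cl_obj i u v)
        ≫ pullLift (pushObj i u) (v ≫ eqToHom (push_q_obj i u).symm)

/-- The span `A ←p J →q B` *jointly reflects identity morphisms*. -/
def JointlyReflectsId (p : J ⥤ A) (q : J ⥤ B) : Prop :=
  ∀ {i j : J} (s : i ⟶ j),
    (∃ h : p.obj i = p.obj j, p.map s = eqToHom h) →
    (∃ h : q.obj i = q.obj j, q.map s = eqToHom h) →
    ∃ h : i = j, s = eqToHom h

/-- The span `A ←p J →q B` is a *reversed discrete two-sided 1-fibration*: each
`u : p i → a` has a unique `q`-vertical lift, each `v : b → q j` has a unique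
`p`-vertical lift, and each `s : i → j` factors as the `p`-vertical lift of `q s`
preceded by the `q`-vertical lift of `p s` through a common object. -/
def RevDiscrete (p : J ⥤ A) (q : J ⥤ B) : Prop :=
  -- (l)
  (∀ (i : J) {a : A} (u : p.obj i ⟶ a),
    ∃! l : Σ j : J, (i ⟶ j),
      p.obj l.1 = a ∧ HEq (p.map l.2) u ∧
      q.obj l.1 = q.obj i ∧ HEq (q.map l.2) (𝟙 (q.obj i))) ∧
  -- (r)
  (∀ {b : B} (j : J) (v : b ⟶ q.obj j),
    ∃! r : Σ i : J, (i ⟶ j),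
      q.obj r.1 = b ∧ HEq (q.map r.2) v ∧
      p.obj r.1 = p.obj j ∧ HEq (p.map r.2) (𝟙 (p.obj j))) ∧
  -- (c)
  (∀ {i j : J} (s : i ⟶ j) (k k' : J) (l : i ⟶ k) (r : k' ⟶ j),
    (p.obj k = p.obj j ∧ HEq (p.map l) (p.map s) ∧
      q.obj k = q.obj i ∧ HEq (q.map l) (𝟙 (q.obj i))) →
    (q.obj k' = q.obj i ∧ HEq (q.map r) (q.map s) ∧
      p.obj k' = p.obj j ∧ HEq (p.map r) (𝟙 (p.obj j))) →
    k = k' ∧ ∀ h : k = k', s = l ≫ eqToHom h ≫ r)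

section Helpers
variable {C : Type*} [Category C]

theorem eqToHom_heq_id' {x y : C} (h : x = y) : HEq (eqToHom h) (𝟙 x) := by subst h; rfl

theorem eqToHom_heq_id'' {x y : C} (h : x = y) : HEq (eqToHom h) (𝟙 y) := by subst h; rfl

theorem hom_heq_iff_left {W X Z : C} (h : X = Z) (f : W ⟶ X) (g : W ⟶ Z) :
    HEq f g ↔ f = g ≫ eqToHom h.symm := by subst h; simp

theorem hom_heq_iff_right {W X Z : C} (h : W = X) (f : W ⟶ Z) (g : X ⟶ Z) :
    HEq f g ↔ f = eqToHom h ≫ g := by subst h; simp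

theorem heq_id_iff' {W X Y : C} (h : W = Y) (h' : X = Y) (f : W ⟶ X) :
    HEq f (𝟙 Y) ↔ f = eqToHom (h.trans h'.symm) := by subst h; subst h'; simp

theorem sigEq' {α : Type*} {β : α → Type*} {a a' : α} {b : β a} {b' : β a'}
    (h : (⟨a, b⟩ : Σ x, β x) = ⟨a', b'⟩) : a = a' ∧ HEq b b' := by
  cases h; exact ⟨rfl, HEq.rfl⟩

theorem sigEq {α : Type*} {β : α → Type*} {a a' : α} {b : β a} {b' : β a'}
    (h : a = a') (h' : HEq b b') : (⟨a, b⟩ : Σ x, β x) = ⟨a', b'⟩ := by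
  subst h; rw [eq_of_heq h']
end Helpers

section Discrete
variable {p : J ⥤ A} {q : J ⥤ B}

noncomputable def dPushObj (hD : RevDiscrete p q) (i : J) {a : A} (u : p.obj i ⟶ a) : J :=
  (hD.1 i u).choose.1

noncomputable def dPushLift (hD : RevDiscrete p q) (i : J) {a : A} (u : p.obj i ⟶ a) :
    i ⟶ dPushObj hD i u :=
  (hD.1 i u).choose.2

theorem dPush_p_obj (hD : RevDiscrete p q) (i : J) {a : A} (u : p.obj i ⟶ a) :
    p.obj (dPushObj hD i u) = a := (hD.1 i u).choose_spec.1.1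

theorem dPush_heq_p (hD : RevDiscrete p q) (i : J) {a : A} (u : p.obj i ⟶ a) :
    HEq (p.map (dPushLift hD i u)) u := (hD.1 i u).choose_spec.1.2.1

theorem dPush_q_obj (hD : RevDiscrete p q) (i : J) {a : A} (u : p.obj i ⟶ a) :
    q.obj (dPushObj hD i u) = q.obj i := (hD.1 i u).choose_spec.1.2.2.1

theorem dPush_heq_q (hD : RevDiscrete p q) (i : J) {a : A} (u : p.obj i ⟶ a) :
    HEq (q.map (dPushLift hD i u)) (𝟙 (q.obj i)) := (hD.1 i u).choose_spec.1.2.2.2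

theorem dPush_p_map (hD : RevDiscrete p q) (i : J) {a : A} (u : p.obj i ⟶ a) :
    p.map (dPushLift hD i u) = u ≫ eqToHom (dPush_p_obj hD i u).symm :=
  (hom_heq_iff_left (dPush_p_obj hD i u) _ _).mp (dPush_heq_p hD i u)

theorem dPush_q_map (hD : RevDiscrete p q) (i : J) {a : A} (u : p.obj i ⟶ a) :
    q.map (dPushLift hD i u) = eqToHom (dPush_q_obj hD i u).symm :=
  (heq_id_iff' rfl (dPush_q_obj hD i u) _).mp (dPush_heq_q hD i u)

theorem dPush_unique (hD : RevDiscrete p q) {i j : J} {a : A} (u : p.obj i ⟶ a)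
    (l : i ⟶ j) (h1 : p.obj j = a) (h2 : HEq (p.map l) u)
    (h3 : q.obj j = q.obj i) (h4 : HEq (q.map l) (𝟙 (q.obj i))) :
    (⟨j, l⟩ : Σ k, i ⟶ k) = ⟨dPushObj hD i u, dPushLift hD i u⟩ :=
  (hD.1 i u).choose_spec.2 ⟨j, l⟩ ⟨h1, h2, h3, h4⟩

noncomputable def dPullObj (hD : RevDiscrete p q) {b : B} (j : J) (v : b ⟶ q.obj j) : J :=
  (hD.2.1 j v).choose.1

noncomputable def dPullLift (hD : RevDiscrete p q) {b : B} (j : J) (v : b ⟶ q.obj j) :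
    dPullObj hD j v ⟶ j :=
  (hD.2.1 j v).choose.2

theorem dPull_q_obj (hD : RevDiscrete p q) {b : B} (j : J) (v : b ⟶ q.obj j) :
    q.obj (dPullObj hD j v) = b := (hD.2.1 j v).choose_spec.1.1

theorem dPull_heq_q (hD : RevDiscrete p q) {b : B} (j : J) (v : b ⟶ q.obj j) :
    HEq (q.map (dPullLift hD j v)) v := (hD.2.1 j v).choose_spec.1.2.1

theorem dPull_p_obj (hD : RevDiscrete p q) {b : B} (j : J) (v : b ⟶ q.obj j) :
    p.obj (dPullObj hD j v) = p.obj j := (hD.2.1 j v).choose_spec.1.2.2.1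

theorem dPull_heq_p (hD : RevDiscrete p q) {b : B} (j : J) (v : b ⟶ q.obj j) :
    HEq (p.map (dPullLift hD j v)) (𝟙 (p.obj j)) := (hD.2.1 j v).choose_spec.1.2.2.2

theorem dPull_q_map (hD : RevDiscrete p q) {b : B} (j : J) (v : b ⟶ q.obj j) :
    q.map (dPullLift hD j v) = eqToHom (dPull_q_obj hD j v) ≫ v :=
  (hom_heq_iff_right (dPull_q_obj hD j v) _ _).mp (dPull_heq_q hD j v)

theorem dPull_p_map (hD : RevDiscrete p q) {b : B} (j : J) (v : b ⟶ q.obj j) :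
    p.map (dPullLift hD j v) = eqToHom (dPull_p_obj hD j v) :=
  (heq_id_iff' (dPull_p_obj hD j v) rfl _).mp (dPull_heq_p hD j v)

theorem dPull_unique (hD : RevDiscrete p q) {i j : J} {b : B} (v : b ⟶ q.obj j)
    (r : i ⟶ j) (h1 : q.obj i = b) (h2 : HEq (q.map r) v)
    (h3 : p.obj i = p.obj j) (h4 : HEq (p.map r) (𝟙 (p.obj j))) :
    (⟨i, r⟩ : Σ k, k ⟶ j) = ⟨dPullObj hD j v, dPullLift hD j v⟩ :=
  (hD.2.1 j v).choose_spec.2 ⟨i, r⟩ ⟨h1, h2, h3, h4⟩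

theorem jointlyFaithful (hD : RevDiscrete p q) {x y : J} (t₁ t₂ : x ⟶ y)
    (hp : p.map t₁ = p.map t₂) (hq : q.map t₁ = q.map t₂) : t₁ = t₂ := by
  obtain ⟨hk, hfac⟩ := hD.2.2 t₁ (dPushObj hD x (p.map t₁)) (dPullObj hD y (q.map t₁))
    (dPushLift hD x (p.map t₁)) (dPullLift hD y (q.map t₁))
    ⟨dPush_p_obj hD x _, dPush_heq_p hD x _, dPush_q_obj hD x _, dPush_heq_q hD x _⟩
    ⟨dPull_q_obj hD y _, dPull_heq_q hD y _, dPull_p_obj hD y _, dPull_heq_p hD y _⟩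
  obtain ⟨hk', hfac'⟩ := hD.2.2 t₂ (dPushObj hD x (p.map t₁)) (dPullObj hD y (q.map t₁))
    (dPushLift hD x (p.map t₁)) (dPullLift hD y (q.map t₁))
    ⟨dPush_p_obj hD x _, hp ▸ dPush_heq_p hD x _, dPush_q_obj hD x _, dPush_heq_q hD x _⟩
    ⟨dPull_q_obj hD y _, hq ▸ dPull_heq_q hD y _, dPull_p_obj hD y _, dPull_heq_p hD y _⟩
  exact (hfac hk).trans (hfac' hk).symm

theorem jri_of_discrete (hD : RevDiscrete p q) : JointlyReflectsId p q := by
  intro i j s hp hq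
  obtain ⟨hp, hps⟩ := hp
  obtain ⟨hq, hqs⟩ := hq
  have h1 : (⟨j, s⟩ : Σ k, i ⟶ k) = ⟨dPushObj hD i (𝟙 (p.obj i)), dPushLift hD i (𝟙 (p.obj i))⟩ :=
    dPush_unique hD _ s hp.symm
      ((heq_id_iff' rfl hp.symm _).mpr (by rw [hps]))
      hq.symm ((heq_id_iff' rfl hq.symm _).mpr (by rw [hqs]))
  have h2 : (⟨i, 𝟙 i⟩ : Σ k, i ⟶ k) = ⟨dPushObj hD i (𝟙 (p.obj i)), dPushLift hD i (𝟙 (p.obj i))⟩ :=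
    dPush_unique hD _ (𝟙 i) rfl (by rw [p.map_id]) rfl (by rw [q.map_id])
  obtain ⟨he, hs⟩ := sigEq' (h1.trans h2.symm)
  subst he
  exact ⟨rfl, by rw [eq_of_heq hs]; simp⟩

theorem clAux (hD : RevDiscrete p q) (i : J) {a : A} {b : B} (u : p.obj i ⟶ a)
    (v : b ⟶ q.obj i) :
    dPushObj hD (dPullObj hD i v) (eqToHom (dPull_p_obj hD i v) ≫ u)
      = dPullObj hD (dPushObj hD i u) (v ≫ eqToHom (dPush_q_obj hD i u).symm) ∧
    ∀ h : dPushObj hD (dPullObj hD i v) (eqToHom (dPull_p_obj hD i v) ≫ u)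
      = dPullObj hD (dPushObj hD i u) (v ≫ eqToHom (dPush_q_obj hD i u).symm),
      dPullLift hD i v ≫ dPushLift hD i u
        = dPushLift hD (dPullObj hD i v) (eqToHom (dPull_p_obj hD i v) ≫ u)
          ≫ eqToHom h
          ≫ dPullLift hD (dPushObj hD i u) (v ≫ eqToHom (dPush_q_obj hD i u).symm) :=
  hD.2.2 (dPullLift hD i v ≫ dPushLift hD i u) _ _ _ _
    ⟨(dPush_p_obj hD _ _).trans (dPush_p_obj hD i u).symm,
     (hom_heq_iff_left ((dPush_p_obj hD _ _).trans (dPush_p_obj hD i u).symm) _ _).mpr (by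
       rw [Functor.map_comp, dPush_p_map, dPull_p_map, dPush_p_map]; simp),
     dPush_q_obj hD _ _, dPush_heq_q hD _ _⟩
    ⟨(dPull_q_obj hD _ _).trans (dPull_q_obj hD i v).symm,
     (hom_heq_iff_right ((dPull_q_obj hD _ _).trans (dPull_q_obj hD i v).symm) _ _).mpr (by
       rw [Functor.map_comp, dPull_q_map, dPull_q_map, dPush_q_map]; simp),
     dPull_p_obj hD _ _, dPull_heq_p hD _ _⟩

/-- `q`-image of any morphism out of a push object composed back. -/
theorem dPush_q_cancel (hD : RevDiscrete p q) {i j : J} {a : A} (u : p.obj i ⟶ a)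
    {s : i ⟶ j} (t : dPushObj hD i u ⟶ j) (h : dPushLift hD i u ≫ t = s) :
    q.map t = eqToHom (dPush_q_obj hD i u) ≫ q.map s := by
  rw [← h, Functor.map_comp, dPush_q_map, ← Category.assoc, eqToHom_trans, eqToHom_refl,
    Category.id_comp]

theorem dPull_p_cancel (hD : RevDiscrete p q) {i j : J} {b : B} (v : b ⟶ q.obj j)
    {s : i ⟶ j} (t : i ⟶ dPullObj hD j v) (h : t ≫ dPullLift hD j v = s) :
    p.map t = p.map s ≫ eqToHom (dPull_p_obj hD j v).symm := by
  rw [← h, Functor.map_comp, dPull_p_map, Category.assoc, eqToHom_trans, eqToHom_refl,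
    Category.comp_id]

noncomputable def cleavageOfDiscrete (hD : RevDiscrete p q) : RevSplitCleavage p q where
  pushObj i _ u := dPushObj hD i u
  push_p_obj i _ u := dPush_p_obj hD i u
  push_q_obj i _ u := dPush_q_obj hD i u
  pushLift i _ u := dPushLift hD i u
  push_p_map i _ u := dPush_p_map hD i u
  push_q_map i _ u := dPush_q_map hD i u
  push_opcart := by
    intro i j a u s v hs
    have h₁ : p.obj (dPushObj hD i u) = a := dPush_p_obj hD i u
    obtain ⟨hk, hfac⟩ := hD.2.2 s
      (dPushObj hD (dPushObj hD i u) (eqToHom h₁ ≫ v)) (dPullObj hD j (q.map s))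
      (dPushLift hD i u ≫ dPushLift hD (dPushObj hD i u) (eqToHom h₁ ≫ v))
      (dPullLift hD j (q.map s))
      ⟨dPush_p_obj hD _ _,
        (hom_heq_iff_left (dPush_p_obj hD _ _) _ _).mpr (by
          rw [Functor.map_comp, dPush_p_map, dPush_p_map, hs]
          simp),
        (dPush_q_obj hD _ _).trans (dPush_q_obj hD i u),
        (heq_id_iff' rfl ((dPush_q_obj hD _ _).trans (dPush_q_obj hD i u)) _).mpr (by
          rw [Functor.map_comp, dPush_q_map, dPush_q_map, eqToHom_trans])⟩
      ⟨dPull_q_obj hD j _, dPull_heq_q hD j _, dPull_p_obj hD j _, dPull_heq_p hD j _⟩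
    have hfac' := hfac hk
    have hv2 : dPushLift hD i u ≫ dPushLift hD (dPushObj hD i u) (eqToHom h₁ ≫ v)
        ≫ eqToHom hk ≫ dPullLift hD j (q.map s) = s := by
      conv_rhs => rw [hfac']
      simp only [Category.assoc]
    refine ⟨dPushLift hD (dPushObj hD i u) (eqToHom h₁ ≫ v) ≫ eqToHom hk
      ≫ dPullLift hD j (q.map s), ⟨?_, hv2⟩, ?_⟩
    · rw [Functor.map_comp, Functor.map_comp, dPush_p_map, dPull_p_map, eqToHom_map]
      simp
    · rintro t ⟨hpt, hct⟩
      refine jointlyFaithful hD _ _ ?_ ?_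
      · rw [hpt, Functor.map_comp, Functor.map_comp, dPush_p_map, dPull_p_map, eqToHom_map]
        simp
      · rw [dPush_q_cancel hD u t hct, dPush_q_cancel hD u _ hv2]
  push_comp_obj := by
    intro i a a' u v
    exact (congrArg Sigma.fst (dPush_unique hD (u ≫ v)
      (dPushLift hD i u ≫ dPushLift hD (dPushObj hD i u) (eqToHom (dPush_p_obj hD i u) ≫ v))
      (dPush_p_obj hD _ _)
      ((hom_heq_iff_left (dPush_p_obj hD _ _) _ _).mpr (by
        rw [Functor.map_comp, dPush_p_map, dPush_p_map]; simp))
      ((dPush_q_obj hD _ _).trans (dPush_q_obj hD i u))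
      ((heq_id_iff' rfl ((dPush_q_obj hD _ _).trans (dPush_q_obj hD i u)) _).mpr (by
        rw [Functor.map_comp, dPush_q_map, dPush_q_map, eqToHom_trans])))).symm
  push_comp_mor := by
    intro i a a' u v
    obtain ⟨ho, hm⟩ := sigEq' (dPush_unique hD (u ≫ v)
      (dPushLift hD i u ≫ dPushLift hD (dPushObj hD i u) (eqToHom (dPush_p_obj hD i u) ≫ v))
      (dPush_p_obj hD _ _)
      ((hom_heq_iff_left (dPush_p_obj hD _ _) _ _).mpr (by
        rw [Functor.map_comp, dPush_p_map, dPush_p_map]; simp))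
      ((dPush_q_obj hD _ _).trans (dPush_q_obj hD i u))
      ((heq_id_iff' rfl ((dPush_q_obj hD _ _).trans (dPush_q_obj hD i u)) _).mpr (by
        rw [Functor.map_comp, dPush_q_map, dPush_q_map, eqToHom_trans])))
    exact ((hom_heq_iff_left ho.symm _ _).mp hm.symm).trans (by simp only [Category.assoc])
  push_id_obj := by
    intro i
    exact (congrArg Sigma.fst (dPush_unique hD (𝟙 (p.obj i)) (𝟙 i) rfl
      (by rw [p.map_id]) rfl (by rw [q.map_id]))).symm
  push_id_mor := by
    intro i
    obtain ⟨ho, hm⟩ := sigEq' (dPush_unique hD (𝟙 (p.obj i)) (𝟙 i) rfl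
      (by rw [p.map_id]) rfl (by rw [q.map_id]))
    exact (heq_id_iff' rfl ho.symm _).mp hm.symm
  pullObj j v := dPullObj hD j v
  pull_q_obj j v := dPull_q_obj hD j v
  pull_p_obj j v := dPull_p_obj hD j v
  pullLift j v := dPullLift hD j v
  pull_q_map j v := dPull_q_map hD j v
  pull_p_map j v := dPull_p_map hD j v
  pull_cart := by
    intro i j b v s w hs
    have h₁ : q.obj (dPullObj hD j v) = b := dPull_q_obj hD j v
    obtain ⟨hk, hfac⟩ := hD.2.2 s
      (dPushObj hD i (p.map s)) (dPullObj hD (dPullObj hD j v) (w ≫ eqToHom h₁.symm))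
      (dPushLift hD i (p.map s))
      (dPullLift hD (dPullObj hD j v) (w ≫ eqToHom h₁.symm) ≫ dPullLift hD j v)
      ⟨dPush_p_obj hD i _, dPush_heq_p hD i _, dPush_q_obj hD i _, dPush_heq_q hD i _⟩
      ⟨dPull_q_obj hD _ _,
        (hom_heq_iff_right (dPull_q_obj hD _ _) _ _).mpr (by
          rw [Functor.map_comp, dPull_q_map, dPull_q_map, hs]
          simp),
        (dPull_p_obj hD _ _).trans (dPull_p_obj hD j v),
        (heq_id_iff' ((dPull_p_obj hD _ _).trans (dPull_p_obj hD j v)) rfl _).mpr (by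
          rw [Functor.map_comp, dPull_p_map, dPull_p_map, eqToHom_trans])⟩
    have hfac' := hfac hk
    have hv2 : (dPushLift hD i (p.map s) ≫ eqToHom hk
        ≫ dPullLift hD (dPullObj hD j v) (w ≫ eqToHom h₁.symm)) ≫ dPullLift hD j v = s := by
      conv_rhs => rw [hfac']
      simp only [Category.assoc]
    refine ⟨dPushLift hD i (p.map s) ≫ eqToHom hk
      ≫ dPullLift hD (dPullObj hD j v) (w ≫ eqToHom h₁.symm), ⟨?_, hv2⟩, ?_⟩
    · rw [Functor.map_comp, Functor.map_comp, dPush_q_map, dPull_q_map, eqToHom_map]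
      simp
    · rintro t ⟨hqt, hct⟩
      refine jointlyFaithful hD _ _ ?_ ?_
      · rw [dPull_p_cancel hD v t hct, dPull_p_cancel hD v _ hv2]
      · rw [hqt, Functor.map_comp, Functor.map_comp, dPush_q_map, dPull_q_map, eqToHom_map]
        simp
  pull_comp_obj := by
    intro b b' j v w
    exact (congrArg Sigma.fst (dPull_unique hD (w ≫ v)
      (dPullLift hD (dPullObj hD j v) (w ≫ eqToHom (dPull_q_obj hD j v).symm) ≫ dPullLift hD j v)
      (dPull_q_obj hD _ _)
      ((hom_heq_iff_right (dPull_q_obj hD _ _) _ _).mpr (by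
        rw [Functor.map_comp, dPull_q_map, dPull_q_map]; simp))
      ((dPull_p_obj hD _ _).trans (dPull_p_obj hD j v))
      ((heq_id_iff' ((dPull_p_obj hD _ _).trans (dPull_p_obj hD j v)) rfl _).mpr (by
        rw [Functor.map_comp, dPull_p_map, dPull_p_map, eqToHom_trans])))).symm
  pull_comp_mor := by
    intro b b' j v w
    obtain ⟨ho, hm⟩ := sigEq' (dPull_unique hD (w ≫ v)
      (dPullLift hD (dPullObj hD j v) (w ≫ eqToHom (dPull_q_obj hD j v).symm) ≫ dPullLift hD j v)
      (dPull_q_obj hD _ _)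
      ((hom_heq_iff_right (dPull_q_obj hD _ _) _ _).mpr (by
        rw [Functor.map_comp, dPull_q_map, dPull_q_map]; simp))
      ((dPull_p_obj hD _ _).trans (dPull_p_obj hD j v))
      ((heq_id_iff' ((dPull_p_obj hD _ _).trans (dPull_p_obj hD j v)) rfl _).mpr (by
        rw [Functor.map_comp, dPull_p_map, dPull_p_map, eqToHom_trans])))
    exact (hom_heq_iff_right ho.symm _ _).mp hm.symm
  pull_id_obj := by
    intro j
    exact (congrArg Sigma.fst (dPull_unique hD (𝟙 (q.obj j)) (𝟙 j) rfl
      (by rw [q.map_id]) rfl (by rw [p.map_id]))).symm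
  pull_id_mor := by
    intro j
    obtain ⟨ho, hm⟩ := sigEq' (dPull_unique hD (𝟙 (q.obj j)) (𝟙 j) rfl
      (by rw [q.map_id]) rfl (by rw [p.map_id]))
    exact ((hom_heq_iff_right ho.symm _ _).mp hm.symm).trans (by simp)
  cl_obj := by
    intro i a b u v
    exact (clAux hD i u v).1
  cl_mor := by
    intro i a b u v
    exact (clAux hD i u v).2 (clAux hD i u v).1

theorem pushPred (C : RevSplitCleavage p q) (i : J) {a : A} (u : p.obj i ⟶ a) :
    p.obj ((⟨C.pushObj i u, C.pushLift i u⟩ : Σ j, i ⟶ j).1) = a ∧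
    HEq (p.map (⟨C.pushObj i u, C.pushLift i u⟩ : Σ j, i ⟶ j).2) u ∧
    q.obj ((⟨C.pushObj i u, C.pushLift i u⟩ : Σ j, i ⟶ j).1) = q.obj i ∧
    HEq (q.map (⟨C.pushObj i u, C.pushLift i u⟩ : Σ j, i ⟶ j).2) (𝟙 (q.obj i)) :=
  ⟨C.push_p_obj i u, by rw [C.push_p_map]; exact comp_eqToHom_heq _ _,
   C.push_q_obj i u, by rw [C.push_q_map]; exact eqToHom_heq_id' _⟩

theorem pullPred (C : RevSplitCleavage p q) {b : B} (j : J) (v : b ⟶ q.obj j) :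
    q.obj ((⟨C.pullObj j v, C.pullLift j v⟩ : Σ i, i ⟶ j).1) = b ∧
    HEq (q.map (⟨C.pullObj j v, C.pullLift j v⟩ : Σ i, i ⟶ j).2) v ∧
    p.obj ((⟨C.pullObj j v, C.pullLift j v⟩ : Σ i, i ⟶ j).1) = p.obj j ∧
    HEq (p.map (⟨C.pullObj j v, C.pullLift j v⟩ : Σ i, i ⟶ j).2) (𝟙 (p.obj j)) :=
  ⟨C.pull_q_obj j v, by rw [C.pull_q_map]; exact eqToHom_comp_heq v (C.pull_q_obj j v),
   C.pull_p_obj j v, by rw [C.pull_p_map]; exact eqToHom_heq_id'' _⟩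

theorem toDiscrete (C : RevSplitCleavage p q) (hJ : JointlyReflectsId p q) :
    RevDiscrete p q := by
  have HL : ∀ (i : J) {a : A} (u : p.obj i ⟶ a),
      ∃! l : Σ j : J, (i ⟶ j),
        p.obj l.1 = a ∧ HEq (p.map l.2) u ∧
        q.obj l.1 = q.obj i ∧ HEq (q.map l.2) (𝟙 (q.obj i)) := by
    intro i a u
    refine ⟨⟨C.pushObj i u, C.pushLift i u⟩, pushPred C i u, ?_⟩
    rintro ⟨j, l⟩ ⟨h1, h2, h3, h4⟩
    have hl : p.map l = u ≫ eqToHom h1.symm := (hom_heq_iff_left h1 _ _).mp h2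
    obtain ⟨vt, ⟨hvp, hvc⟩, -⟩ := C.push_opcart u l (eqToHom h1.symm) (by rw [hl])
    have hql : q.map l = eqToHom h3.symm := (heq_id_iff' rfl h3 _).mp h4
    have hqv : q.map vt = eqToHom ((C.push_q_obj i u).trans h3.symm) := by
      have h5 := congrArg q.map hvc
      rw [Functor.map_comp, C.push_q_map, hql, eqToHom_comp_iff] at h5
      rw [h5, eqToHom_trans]
    have hpv : p.map vt = eqToHom ((C.push_p_obj i u).trans h1.symm) := by
      rw [hvp, eqToHom_trans]
    obtain ⟨he, hse⟩ := hJ vt ⟨_, hpv⟩ ⟨_, hqv⟩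
    refine sigEq he.symm ?_
    rw [← hvc, hse]
    exact comp_eqToHom_heq _ _
  have HR : ∀ {b : B} (j : J) (v : b ⟶ q.obj j),
      ∃! r : Σ i : J, (i ⟶ j),
        q.obj r.1 = b ∧ HEq (q.map r.2) v ∧
        p.obj r.1 = p.obj j ∧ HEq (p.map r.2) (𝟙 (p.obj j)) := by
    intro b j v
    refine ⟨⟨C.pullObj j v, C.pullLift j v⟩, pullPred C j v, ?_⟩
    rintro ⟨i, r⟩ ⟨h1, h2, h3, h4⟩
    have hr : q.map r = eqToHom h1 ≫ v := (hom_heq_iff_right h1 _ _).mp h2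
    obtain ⟨wt, ⟨hwq, hwc⟩, -⟩ := C.pull_cart v r (eqToHom h1) (by rw [hr])
    have hpr : p.map r = eqToHom h3 := (heq_id_iff' h3 rfl _).mp h4
    have hpw : p.map wt = eqToHom (h3.trans (C.pull_p_obj j v).symm) := by
      have h5 := congrArg p.map hwc
      rw [Functor.map_comp, C.pull_p_map, hpr, comp_eqToHom_iff] at h5
      rw [h5, eqToHom_trans]
    have hqw : q.map wt = eqToHom (h1.trans (C.pull_q_obj j v).symm) := by
      rw [hwq, eqToHom_trans]
    obtain ⟨he, hse⟩ := hJ wt ⟨_, hpw⟩ ⟨_, hqw⟩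
    refine sigEq he ?_
    rw [← hwc, hse]
    exact eqToHom_comp_heq _ _
  refine ⟨HL, HR, ?_⟩
  intro i j s k k' l r hl hr
  have h₁ : (⟨k, l⟩ : Σ m, i ⟶ m) = ⟨C.pushObj i (p.map s), C.pushLift i (p.map s)⟩ :=
    (HL i (p.map s)).unique hl (pushPred C i (p.map s))
  obtain ⟨t, ⟨hpt, hct⟩, -⟩ := C.push_opcart (p.map s) s (𝟙 (p.obj j))
    (by rw [Category.comp_id])
  have hq2 : q.map t = eqToHom (C.push_q_obj i (p.map s)) ≫ q.map s := by
    have h5 := congrArg q.map hct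
    rw [Functor.map_comp, C.push_q_map, eqToHom_comp_iff] at h5
    rw [h5]
  have hpred : q.obj ((⟨C.pushObj i (p.map s), t⟩ : Σ m, m ⟶ j).1) = q.obj i ∧
      HEq (q.map (⟨C.pushObj i (p.map s), t⟩ : Σ m, m ⟶ j).2) (q.map s) ∧
      p.obj ((⟨C.pushObj i (p.map s), t⟩ : Σ m, m ⟶ j).1) = p.obj j ∧
      HEq (p.map (⟨C.pushObj i (p.map s), t⟩ : Σ m, m ⟶ j).2) (𝟙 (p.obj j)) :=
    ⟨C.push_q_obj i (p.map s),
     (hom_heq_iff_right (C.push_q_obj i (p.map s)) _ _).mpr hq2,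
     C.push_p_obj i (p.map s),
     (heq_id_iff' (C.push_p_obj i (p.map s)) rfl _).mpr (by
       rw [hpt, Category.comp_id])⟩
  have h₂ : (⟨C.pushObj i (p.map s), t⟩ : Σ m, m ⟶ j) = ⟨k', r⟩ :=
    (HR j (q.map s)).unique hpred hr
  obtain ⟨hk1, hl'⟩ := sigEq' h₁
  obtain ⟨hk2, ht'⟩ := sigEq' h₂
  subst hk1
  refine ⟨hk2, ?_⟩
  subst hk2
  intro h
  have hid : eqToHom h = 𝟙 (C.pushObj i (p.map s)) := by simp
  rw [eq_of_heq hl', hid, Category.id_comp, ← eq_of_heq ht', hct]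

theorem cleavage_subsingleton (hD : RevDiscrete p q) :
    Subsingleton (RevSplitCleavage p q) := by
  constructor
  intro C C'
  have keyP : ∀ (i : J) (a : A) (u : p.obj i ⟶ a),
      (⟨C.pushObj i u, C.pushLift i u⟩ : Σ j, i ⟶ j)
        = ⟨C'.pushObj i u, C'.pushLift i u⟩ :=
    fun i a u => ((hD.1 i u).unique (pushPred C i u) (pushPred C' i u))
  have keyQ : ∀ (b : B) (j : J) (v : b ⟶ q.obj j),
      (⟨C.pullObj j v, C.pullLift j v⟩ : Σ i, i ⟶ j)
        = ⟨C'.pullObj j v, C'.pullLift j v⟩ :=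
    fun b j v => ((hD.2.1 j v).unique (pullPred C j v) (pullPred C' j v))
  obtain ⟨a1, a2, a3, a4, a5, a6, a7, a8, a9, a10, a11, a12, a13, a14, a15, a16, a17,
    a18, a19, a20, a21, a22, a23, a24⟩ := C
  obtain ⟨b1, b2, b3, b4, b5, b6, b7, b8, b9, b10, b11, b12, b13, b14, b15, b16, b17,
    b18, b19, b20, b21, b22, b23, b24⟩ := C'
  have e1 : @a1 = @b1 := by
    funext i a u
    exact congrArg Sigma.fst (keyP i a u)
  subst e1
  have e2 : @a4 = @b4 := by
    funext i a u
    exact eq_of_heq (sigEq' (keyP i a u)).2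
  subst e2
  have e3 : @a12 = @b12 := by
    funext b j v
    exact congrArg Sigma.fst (keyQ b j v)
  subst e3
  have e4 : @a15 = @b15 := by
    funext b j v
    exact eq_of_heq (sigEq' (keyQ b j v)).2
  subst e4
  rfl

end Discrete

/-- For a span `A ←p J →q B` of functors between 1-categories the following are
equivalent: (a) `J` is a reversed split two-sided 1-fibration that jointly reflects
identity morphisms; (b) `J` is a reversed discrete two-sided 1-fibration.  In either
case the cleavages are unique. -/
theorem reversed_discrete_iff_split_jointly_reflecting (p : J ⥤ A) (q : J ⥤ B) :
    ((Nonempty (RevSplitCleavage p q) ∧ JointlyReflectsId p q) ↔ RevDiscrete p q) ∧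
    (RevDiscrete p q → Subsingleton (RevSplitCleavage p q)) ∧
    ((Nonempty (RevSplitCleavage p q) ∧ JointlyReflectsId p q) →
      Subsingleton (RevSplitCleavage p q)) := by
  refine ⟨⟨?_, ?_⟩, fun hD => cleavage_subsingleton hD, fun h => ?_⟩
  · rintro ⟨⟨C⟩, hJ⟩
    exact toDiscrete C hJ
  · intro hD
    exact ⟨⟨cleavageOfDiscrete hD⟩, jri_of_discrete hD⟩
  · exact cleavage_subsingleton (toDiscrete h.1.some h.2)

end SRK
end
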